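/- arXiv:2009.01996 — 6 statements merged into one kernel-verified Lean document; each statement's English description precedes it below -/
import Mathlib

section
/- Let G be a graph of size q admitting a local antimagic labeling f (a bijection from E(G) to {1,...,q} such that adjacent vertices receive distinct induced sums) whose induced vertex labeling takes exactly two values x and y with x < y. Let X and Y be the numbers of vertices with induced label x and y respectively. Then G is bipartite with parts of sizes X and Y, X > Y, and xX = yY = q(q+1)/2. -/
open Finset

namespace LocalAntimagic

variable {V : Type*} [Fintype V] [DecidableEq V]

/-- The induced vertex label: sum of labels of edges incident to `v`. -/
def inducedSum (G : SimpleGraph V) [DecidableRel G.Adj] (f : Sym2 V → ℕ) (v : V) : ℕ :=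
  ∑ e ∈ G.incidenceFinset v, f e

/-- `f` is a local antimagic labeling of `G`: a bijection from the edge set onto
`{1, …, q}` (`q` the number of edges) such that adjacent vertices get distinct
induced sums. -/
def IsLocalAntimagic (G : SimpleGraph V) [DecidableRel G.Adj] (f : Sym2 V → ℕ) : Prop :=
  Set.BijOn f G.edgeSet (Set.Icc 1 G.edgeFinset.card) ∧
  ∀ ⦃u v⦄, G.Adj u v → inducedSum G f u ≠ inducedSum G f v

/-- The number of distinct induced vertex labels under `f`. -/
def colorCount (G : SimpleGraph V) [DecidableRel G.Adj] (f : Sym2 V → ℕ) : ℕ :=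
  (Finset.image (inducedSum G f) Finset.univ).card

/-- The local antimagic chromatic number of `G` (`⊤` if no local antimagic
labeling exists). -/
noncomputable def chiLA (G : SimpleGraph V) [DecidableRel G.Adj] : ℕ∞ :=
  sInf {n : ℕ∞ | ∃ f : Sym2 V → ℕ, IsLocalAntimagic G f ∧ (colorCount G f : ℕ∞) = n}

/-- The circulant graph on `ℤ/nℤ` with connection set `S`. -/
def circulant (n : ℕ) [NeZero n] (S : Finset (ZMod n)) : SimpleGraph (ZMod n) where
  Adj u v := u ≠ v ∧ (u - v ∈ S ∨ v - u ∈ S)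
  symm := ⟨fun u v h => ⟨h.1.symm, h.2.symm⟩⟩
  loopless := ⟨fun v h => h.1 rfl⟩

instance (n : ℕ) [NeZero n] (S : Finset (ZMod n)) : DecidableRel (circulant n S).Adj :=
  fun u v => inferInstanceAs (Decidable (u ≠ v ∧ (u - v ∈ S ∨ v - u ∈ S)))

/-- The cycle `C_n` as a circulant graph on `ℤ/nℤ`. -/
def cycle (n : ℕ) [NeZero n] : SimpleGraph (ZMod n) := circulant n {1}

instance (n : ℕ) [NeZero n] : DecidableRel (cycle n).Adj :=
  inferInstanceAs (DecidableRel (circulant n {1}).Adj)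

/-- The graph obtained from `G` by merging vertices according to the
identification map `q` (adjacent iff distinct and some preimages are adjacent). -/
def mergeGraph {V' W : Type*} (G : SimpleGraph V') (q : V' → W) : SimpleGraph W where
  Adj a b := a ≠ b ∧ ∃ u v, q u = a ∧ q v = b ∧ G.Adj u v
  symm := by
    constructor
    rintro a b ⟨hab, u, v, hu, hv, huv⟩
    exact ⟨hab.symm, v, u, hv, hu, huv.symm⟩
  loopless := ⟨fun a h => h.1 rfl⟩

end LocalAntimagic
open LocalAntimagic in
/-- two-value local antimagic labelings force a bipartition with
`X > Y` and `xX = yY = q(q+1)/2`. -/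
theorem stmt0 {V : Type*} [Fintype V] [DecidableEq V] (G : SimpleGraph V)
    [DecidableRel G.Adj] (hconn : G.Connected) (f : Sym2 V → ℕ)
    (hf : IsLocalAntimagic G f) (x y : ℕ) (hxy : x < y)
    (hvals : Finset.image (inducedSum G f) Finset.univ = {x, y}) :
    G.Colorable 2 ∧
    (∀ u v, G.Adj u v → (inducedSum G f u = x ↔ inducedSum G f v = y)) ∧
    (Finset.univ.filter fun v => inducedSum G f v = x).card >
      (Finset.univ.filter fun v => inducedSum G f v = y).card ∧
    x * (Finset.univ.filter fun v => inducedSum G f v = x).card =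
      G.edgeFinset.card * (G.edgeFinset.card + 1) / 2 ∧
    y * (Finset.univ.filter fun v => inducedSum G f v = y).card =
      G.edgeFinset.card * (G.edgeFinset.card + 1) / 2 := by
  obtain ⟨hbij, hne⟩ := hf
  have hxney : x ≠ y := hxy.ne
  have hval : ∀ v : V, inducedSum G f v = x ∨ inducedSum G f v = y := by
    intro v
    have h : inducedSum G f v ∈ Finset.image (inducedSum G f) Finset.univ :=
      Finset.mem_image_of_mem _ (Finset.mem_univ v)
    rw [hvals] at h
    simpa using h
  have hadj : ∀ u v, G.Adj u v → (inducedSum G f u = x ↔ inducedSum G f v = y) := by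
    intro u v huv
    have h := hne huv
    rcases hval u with hu | hu <;> rcases hval v with hv | hv <;> simp_all
  -- key summation lemma
  have hkey : ∀ s : Finset V, (∀ e ∈ G.edgeFinset, (s.filter (fun v => v ∈ e)).card = 1) →
      ∑ v ∈ s, inducedSum G f v = ∑ e ∈ G.edgeFinset, f e := by
    intro s hs
    calc ∑ v ∈ s, inducedSum G f v
        = ∑ v ∈ s, ∑ e ∈ G.edgeFinset, if v ∈ e then f e else 0 := by
          refine Finset.sum_congr rfl fun v _ => ?_
          rw [inducedSum, SimpleGraph.incidenceFinset_eq_filter, Finset.sum_filter]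
      _ = ∑ e ∈ G.edgeFinset, ∑ v ∈ s, if v ∈ e then f e else 0 := Finset.sum_comm
      _ = ∑ e ∈ G.edgeFinset, (s.filter (fun v => v ∈ e)).card * f e := by
          refine Finset.sum_congr rfl fun e _ => ?_
          rw [← Finset.sum_filter, Finset.sum_const, smul_eq_mul]
      _ = ∑ e ∈ G.edgeFinset, f e := by
          refine Finset.sum_congr rfl fun e he => by rw [hs e he, one_mul]
  set X := Finset.univ.filter fun v => inducedSum G f v = x with hX
  set Y := Finset.univ.filter fun v => inducedSum G f v = y with hY
  have hcardX : ∀ e ∈ G.edgeFinset, (X.filter (fun v => v ∈ e)).card = 1 := by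
    intro e he
    rw [SimpleGraph.mem_edgeFinset] at he
    induction e with
    | h a b =>
      have hab : G.Adj a b := he
      rcases hval a with ha | ha
      · have hb : inducedSum G f b = y := (hadj a b hab).mp ha
        have : X.filter (fun v => v ∈ s(a, b)) = {a} := by
          ext v
          simp only [hX, Finset.mem_filter, Finset.mem_univ, true_and, Sym2.mem_iff,
            Finset.mem_singleton]
          constructor
          · rintro ⟨hv, rfl | rfl⟩
            · rfl
            · exact absurd hv (by rw [hb]; omega)
          · rintro rfl; exact ⟨ha, Or.inl rfl⟩
        rw [this, Finset.card_singleton]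
      · have hb : inducedSum G f b = x := (hadj b a hab.symm).mpr ha
        have : X.filter (fun v => v ∈ s(a, b)) = {b} := by
          ext v
          simp only [hX, Finset.mem_filter, Finset.mem_univ, true_and, Sym2.mem_iff,
            Finset.mem_singleton]
          constructor
          · rintro ⟨hv, rfl | rfl⟩
            · exact absurd hv (by rw [ha]; omega)
            · rfl
          · rintro rfl; exact ⟨hb, Or.inr rfl⟩
        rw [this, Finset.card_singleton]
  have hcardY : ∀ e ∈ G.edgeFinset, (Y.filter (fun v => v ∈ e)).card = 1 := by
    intro e he
    rw [SimpleGraph.mem_edgeFinset] at he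
    induction e with
    | h a b =>
      have hab : G.Adj a b := he
      rcases hval a with ha | ha
      · have hb : inducedSum G f b = y := (hadj a b hab).mp ha
        have : Y.filter (fun v => v ∈ s(a, b)) = {b} := by
          ext v
          simp only [hY, Finset.mem_filter, Finset.mem_univ, true_and, Sym2.mem_iff,
            Finset.mem_singleton]
          constructor
          · rintro ⟨hv, rfl | rfl⟩
            · exact absurd hv (by rw [ha]; omega)
            · rfl
          · rintro rfl; exact ⟨hb, Or.inr rfl⟩
        rw [this, Finset.card_singleton]
      · have : Y.filter (fun v => v ∈ s(a, b)) = {a} := by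
          have hb : inducedSum G f b = x := (hadj b a hab.symm).mpr ha
          ext v
          simp only [hY, Finset.mem_filter, Finset.mem_univ, true_and, Sym2.mem_iff,
            Finset.mem_singleton]
          constructor
          · rintro ⟨hv, rfl | rfl⟩
            · rfl
            · exact absurd hv (by rw [hb]; omega)
          · rintro rfl; exact ⟨ha, Or.inl rfl⟩
        rw [this, Finset.card_singleton]
  set q := G.edgeFinset.card with hq
  -- total sum of labels
  have hT : ∑ e ∈ G.edgeFinset, f e = ∑ i ∈ Finset.Icc 1 q, i := by
    refine Finset.sum_bij (fun e _ => f e) ?_ ?_ ?_ ?_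
    · intro e he
      have := hbij.mapsTo (SimpleGraph.mem_edgeFinset.mp he)
      simpa [Finset.mem_Icc] using this
    · intro e₁ he₁ e₂ he₂ h
      exact hbij.injOn (SimpleGraph.mem_edgeFinset.mp he₁) (SimpleGraph.mem_edgeFinset.mp he₂) h
    · intro i hi
      obtain ⟨e, he, hfe⟩ := hbij.surjOn (by simpa [Set.mem_Icc] using Finset.mem_Icc.mp hi)
      exact ⟨e, SimpleGraph.mem_edgeFinset.mpr he, hfe⟩
    · intro e _; rfl
  have hgauss : ∀ n : ℕ, (∑ i ∈ Finset.Icc 1 n, i) * 2 = n * (n + 1) := by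
    intro n
    induction n with
    | zero => simp
    | succ k ih =>
      rw [Finset.sum_Icc_succ_top (by omega)]
      have h : (k + 1) * (k + 1 + 1) = k * (k + 1) + (k + 1) * 2 := by ring
      omega
  have hsumX : x * X.card = ∑ e ∈ G.edgeFinset, f e := by
    rw [← hkey X hcardX]
    rw [Finset.sum_congr rfl (fun v hv => (Finset.mem_filter.mp hv).2), Finset.sum_const,
      smul_eq_mul, Nat.mul_comm]
  have hsumY : y * Y.card = ∑ e ∈ G.edgeFinset, f e := by
    rw [← hkey Y hcardY]
    rw [Finset.sum_congr rfl (fun v hv => (Finset.mem_filter.mp hv).2), Finset.sum_const,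
      smul_eq_mul, Nat.mul_comm]
  -- existence of vertices of each color
  have hyX : ∃ v, inducedSum G f v = x := by
    have : x ∈ Finset.image (inducedSum G f) Finset.univ := by rw [hvals]; simp
    simpa using this
  have hyY : ∃ v, inducedSum G f v = y := by
    have : y ∈ Finset.image (inducedSum G f) Finset.univ := by rw [hvals]; simp
    simpa using this
  obtain ⟨vx, hvx⟩ := hyX
  obtain ⟨vy, hvy⟩ := hyY
  have hvxvy : vx ≠ vy := fun h => hxney (by rw [← hvx, h, hvy])
  -- x is positive
  have hxpos : 0 < x := by
    have hnbr : ∃ b, G.Adj vx b := by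
      obtain ⟨w⟩ := hconn.preconnected vx vy
      cases w with
      | nil => exact absurd rfl hvxvy
      | cons h p => exact ⟨_, h⟩
    obtain ⟨b, hb⟩ := hnbr
    have hes : s(vx, b) ∈ G.edgeSet := G.mem_edgeSet.mpr hb
    have hmem : s(vx, b) ∈ G.incidenceFinset vx := by
      rw [SimpleGraph.mem_incidenceFinset]
      exact ⟨hes, Sym2.mem_mk_left _ _⟩
    have h1 : 1 ≤ f s(vx, b) := (hbij.mapsTo hes).1
    have h2 : 1 ≤ inducedSum G f vx :=
      le_trans h1 (Finset.single_le_sum (fun e _ => Nat.zero_le (f e)) hmem)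
    omega
  have hYpos : 0 < Y.card := Finset.card_pos.mpr ⟨vy, by simp [hY, hvy]⟩
  have hXY : x * X.card = y * Y.card := by rw [hsumX, hsumY]
  have hcard : X.card > Y.card := by
    have h1 : x * Y.card < y * Y.card := (Nat.mul_lt_mul_right hYpos).mpr hxy
    have h2 : x * Y.card < x * X.card := by omega
    exact lt_of_mul_lt_mul_left h2 (Nat.zero_le x)
  have hdiv : ∑ e ∈ G.edgeFinset, f e = q * (q + 1) / 2 := by
    have := hgauss q
    rw [hT]; omega
  refine ⟨?_, hadj, hcard, by rw [hsumX, hdiv], by rw [hsumY, hdiv]⟩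
  exact ⟨SimpleGraph.Coloring.mk (fun v => if inducedSum G f v = x then 0 else 1)
    (by
      intro u v huv
      have h := hne huv
      rcases hval u with hu | hu <;> rcases hval v with hv | hv <;>
        simp only [hu, hv] at h ⊢ <;> simp [hxy.ne, hxy.ne'] at h ⊢ )⟩
end

section
/- Suppose G is a connected bipartite graph with q edges and bipartition (V₁, V₂). If the local antimagic chromatic number of G equals 2, then |V₁| ≠ |V₂| and q(q+1)/2 is divisible by both |V₁| and |V₂|. -/
open Finset

lemma gauss_icc (q : ℕ) : ∑ i ∈ Finset.Icc 1 q, i = q * (q + 1) / 2 := by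
  induction q with
  | zero => simp
  | succ n ih =>
    rw [Finset.sum_Icc_succ_top (by omega), ih]
    have h : (n + 1) * (n + 1 + 1) = n * (n + 1) + 2 * (n + 1) := by ring
    omega

set_option maxHeartbeats 1600000 in
open LocalAntimagic in
/-- if a connected bipartite graph has `χ_la = 2`, then the two
parts have distinct sizes, each dividing `q(q+1)/2`. -/
theorem stmt1 {V : Type*} [Fintype V] [DecidableEq V] (G : SimpleGraph V)
    [DecidableRel G.Adj] (hconn : G.Connected)
    (V1 V2 : Finset V) (hdisj : Disjoint V1 V2) (hcover : V1 ∪ V2 = Finset.univ)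
    (hbip : ∀ u v, G.Adj u v → (u ∈ V1 ∧ v ∈ V2) ∨ (u ∈ V2 ∧ v ∈ V1))
    (h2 : chiLA G = 2) :
    V1.card ≠ V2.card ∧
    V1.card ∣ G.edgeFinset.card * (G.edgeFinset.card + 1) / 2 ∧
    V2.card ∣ G.edgeFinset.card * (G.edgeFinset.card + 1) / 2 := by
  classical
  -- extract a labeling with exactly 2 colors
  obtain ⟨f, hf, hcc⟩ : ∃ f : Sym2 V → ℕ, IsLocalAntimagic G f ∧ colorCount G f = 2 := by
    have h3 : sInf {n : ℕ∞ | ∃ f : Sym2 V → ℕ,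
        IsLocalAntimagic G f ∧ (colorCount G f : ℕ∞) = n} < 3 := by
      rw [show sInf {n : ℕ∞ | ∃ f : Sym2 V → ℕ,
        IsLocalAntimagic G f ∧ (colorCount G f : ℕ∞) = n} = chiLA G from rfl, h2]
      norm_num
    obtain ⟨n, hn, hlt⟩ := sInf_lt_iff.mp h3
    have hge : (2 : ℕ∞) ≤ n := h2 ▸ sInf_le hn
    have hn2 : n = 2 := le_antisymm ((ENat.lt_add_one_iff (by simp)).mp (by norm_num at hlt ⊢; exact hlt)) hge
    obtain ⟨f, hf, hcast⟩ := hn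
    refine ⟨f, hf, ?_⟩
    rw [hn2] at hcast
    exact_mod_cast hcast
  -- basic bipartition facts
  have hcov : ∀ v : V, v ∈ V1 ∨ v ∈ V2 := by
    intro v
    have hv := Finset.mem_univ v
    rw [← hcover, Finset.mem_union] at hv
    exact hv
  have hnd : ∀ v : V, v ∈ V1 → v ∈ V2 → False := fun v h1 h2 =>
    Finset.disjoint_left.mp hdisj h1 h2
  have hV1V2 : ∀ u w : V, G.Adj u w → (u ∈ V1 ↔ ¬ w ∈ V1) := by
    intro u w h
    have h1 := hbip u w h
    have c2 := hcov w
    have d1 := hnd u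
    have d2 := hnd w
    tauto
  -- double counting: sum of induced sums over a part = total label sum
  have count : ∀ W : Finset V, (∀ u w : V, G.Adj u w → (u ∈ W ↔ ¬ w ∈ W)) →
      ∑ v ∈ W, inducedSum G f v = ∑ e ∈ G.edgeFinset, f e := by
    intro W hW
    have hdisjW : (W : Set V).PairwiseDisjoint (fun v => G.incidenceFinset v) := by
      intro u hu v hv hne
      simp only [Function.onFun]
      rw [Finset.disjoint_left]
      intro e heu hev
      have adj : G.Adj u v := G.adj_of_mem_incidenceSet hne
        ((G.mem_incidenceFinset u e).mp heu) ((G.mem_incidenceFinset v e).mp hev)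
      have := hW u v adj
      tauto
    have hbiU : W.biUnion (fun v => G.incidenceFinset v) = G.edgeFinset := by
      ext e
      simp only [Finset.mem_biUnion, SimpleGraph.mem_incidenceFinset]
      constructor
      · rintro ⟨v, _, he, _⟩
        rwa [SimpleGraph.mem_edgeFinset]
      · intro he
        rw [SimpleGraph.mem_edgeFinset] at he
        induction e with
        | h u w =>
          have hadj : G.Adj u w := he
          rcases (hW u w hadj).symm.mp with _
          by_cases hu : u ∈ W
          · exact ⟨u, hu, he, Sym2.mem_mk_left u w⟩
          · have hw : w ∈ W := by have := hW u w hadj; tauto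
            exact ⟨w, hw, he, Sym2.mem_mk_right u w⟩
    calc ∑ v ∈ W, inducedSum G f v = ∑ v ∈ W, ∑ e ∈ G.incidenceFinset v, f e := rfl
      _ = ∑ e ∈ W.biUnion (fun v => G.incidenceFinset v), f e := (Finset.sum_biUnion hdisjW).symm
      _ = ∑ e ∈ G.edgeFinset, f e := by rw [hbiU]
  -- the total label sum is q(q+1)/2
  have htot : ∑ e ∈ G.edgeFinset, f e = G.edgeFinset.card * (G.edgeFinset.card + 1) / 2 := by
    rw [← gauss_icc G.edgeFinset.card]
    refine Finset.sum_bij (fun e _ => f e) ?_ ?_ ?_ ?_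
    · intro e he
      rw [SimpleGraph.mem_edgeFinset] at he
      have := hf.1.1 he
      rw [Finset.mem_Icc]
      exact this
    · intro e1 he1 e2 he2 hfe
      exact hf.1.2.1 (SimpleGraph.mem_edgeFinset.mp he1) (SimpleGraph.mem_edgeFinset.mp he2) hfe
    · intro b hb
      rw [Finset.mem_Icc] at hb
      obtain ⟨e, he, hfe⟩ := hf.1.2.2 (Set.mem_Icc.mpr hb)
      exact ⟨e, SimpleGraph.mem_edgeFinset.mpr he, hfe⟩
    · intro e _
      rfl
  -- there are exactly two induced sums a₀, b₀
  obtain ⟨a₀, b₀, hab₀, himg⟩ := Finset.card_eq_two.mp hcc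
  have hmem₀ : ∀ v : V, inducedSum G f v = a₀ ∨ inducedSum G f v = b₀ := by
    intro v
    have : inducedSum G f v ∈ ({a₀, b₀} : Finset ℕ) := by
      rw [← himg]
      exact Finset.mem_image_of_mem _ (Finset.mem_univ v)
    simpa using this
  -- find an edge, hence a vertex of V1
  obtain ⟨x, hx⟩ : ∃ x : V, inducedSum G f x = a₀ := by
    have : a₀ ∈ ({a₀, b₀} : Finset ℕ) := Finset.mem_insert_self _ _
    rw [← himg, Finset.mem_image] at this
    obtain ⟨x, _, hx⟩ := this
    exact ⟨x, hx⟩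
  obtain ⟨y, hy⟩ : ∃ y : V, inducedSum G f y = b₀ := by
    have : b₀ ∈ ({a₀, b₀} : Finset ℕ) := by simp
    rw [← himg, Finset.mem_image] at this
    obtain ⟨y, _, hy⟩ := this
    exact ⟨y, hy⟩
  have hxy : x ≠ y := by
    intro h
    rw [h, hy] at hx
    exact hab₀ hx.symm
  obtain ⟨v₀, hv₀mem⟩ : ∃ v, v ∈ V1 := by
    obtain ⟨p⟩ := hconn.preconnected x y
    cases p with
    | nil => exact absurd rfl hxy
    | cons hadj p' =>
      rcases hbip _ _ hadj with ⟨h1, _⟩ | ⟨_, h1⟩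
      · exact ⟨_, h1⟩
      · exact ⟨_, h1⟩
  -- reduce to the case sum v₀ = a
  suffices H : ∀ a b : ℕ, a ≠ b → (∀ v : V, inducedSum G f v = a ∨ inducedSum G f v = b) →
      inducedSum G f v₀ = a →
      V1.card ≠ V2.card ∧ V1.card ∣ G.edgeFinset.card * (G.edgeFinset.card + 1) / 2 ∧ V2.card ∣ G.edgeFinset.card * (G.edgeFinset.card + 1) / 2 by
    rcases hmem₀ v₀ with h | h
    · exact H a₀ b₀ hab₀ hmem₀ h
    · exact H b₀ a₀ hab₀.symm (fun v => (hmem₀ v).symm) h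
  intro a b hab hmem hv₀
  -- walk invariance: membership in V1 matches having sum a
  have step : ∀ u w : V, G.Adj u w → ((u ∈ V1 ↔ inducedSum G f u = a) ↔
      (w ∈ V1 ↔ inducedSum G f w = a)) := by
    intro u w h
    have hne := hf.2 h
    have hsw : inducedSum G f u = a ↔ ¬ inducedSum G f w = a := by
      rcases hmem u with h1 | h1 <;> rcases hmem w with h2 | h2 <;>
        constructor <;> intro <;> omega
    have huw := hV1V2 u w h
    tauto
  have key' : ∀ u v : V, G.Walk u v →
      ((u ∈ V1 ↔ inducedSum G f u = a) ↔ (v ∈ V1 ↔ inducedSum G f v = a)) := by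
    intro u v p
    induction p with
    | nil => exact Iff.rfl
    | cons h p' ih => exact (step _ _ h).trans ih
  have key : ∀ v : V, v ∈ V1 ↔ inducedSum G f v = a := by
    intro v
    obtain ⟨p⟩ := hconn.preconnected v₀ v
    exact (key' v₀ v p).mp ⟨fun _ => hv₀, fun _ => hv₀mem⟩
  have keyb : ∀ v : V, v ∈ V2 → inducedSum G f v = b := by
    intro v hv
    have h1 : ¬ v ∈ V1 := fun h => hnd v h hv
    rcases hmem v with h | h
    · exact absurd ((key v).mpr h) h1
    · exact h
  -- sums over parts
  have hsum1 : V1.card * a = G.edgeFinset.card * (G.edgeFinset.card + 1) / 2 := by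
    have := count V1 hV1V2
    rw [Finset.sum_congr rfl (fun v hv => (key v).mp hv), Finset.sum_const,
      smul_eq_mul] at this
    rw [this, htot]
  have hsum2 : V2.card * b = G.edgeFinset.card * (G.edgeFinset.card + 1) / 2 := by
    have hV2 : ∀ u w : V, G.Adj u w → (u ∈ V2 ↔ ¬ w ∈ V2) := by
      intro u w h
      have h1 := hbip u w h
      have c1 := hcov u
      have c2 := hcov w
      have d1 := hnd u
      have d2 := hnd w
      tauto
    have := count V2 hV2
    rw [Finset.sum_congr rfl (fun v hv => keyb v hv), Finset.sum_const,
      smul_eq_mul] at this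
    rw [this, htot]
  refine ⟨?_, ⟨a, hsum1.symm⟩, ⟨b, hsum2.symm⟩⟩
  intro hEq
  have hpos : 0 < V1.card := Finset.card_pos.mpr ⟨v₀, hv₀mem⟩
  rw [hEq] at hsum1
  exact hab (Nat.eq_of_mul_eq_mul_left (hEq ▸ hpos) (hsum1.trans hsum2.symm))
end

section
/- Let G be the graph obtained from the path P₇ = u₁u₂⋯u₇ by adding the edges u₁u₄ and u₂u₅. Then G is bipartite with parts {u₁,u₃,u₅,u₇} and {u₂,u₄,u₆}, has 8 edges, and its local antimagic chromatic number is not 2. -/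
open Finset

set_option maxHeartbeats 1000000 in
open LocalAntimagic in
/-- the graph obtained from the path `u₁u₂⋯u₇` (vertices `0,…,6`)
by adding edges `u₁u₄` and `u₂u₅` is bipartite with parts `{0,2,4,6}` and
`{1,3,5}`, has 8 edges, and its local antimagic chromatic number is not 2. -/
theorem stmt2 (G : SimpleGraph (Fin 7)) [DecidableRel G.Adj]
    (hG : ∀ u v : Fin 7, G.Adj u v ↔
      (s(u, v) ∈ ({s(0, 1), s(1, 2), s(2, 3), s(3, 4), s(4, 5), s(5, 6),
        s(0, 3), s(1, 4)} : Finset (Sym2 (Fin 7))))) :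
    (∀ u v : Fin 7, G.Adj u v →
      (u ∈ ({0, 2, 4, 6} : Finset (Fin 7)) ∧ v ∈ ({1, 3, 5} : Finset (Fin 7))) ∨
      (u ∈ ({1, 3, 5} : Finset (Fin 7)) ∧ v ∈ ({0, 2, 4, 6} : Finset (Fin 7)))) ∧
    G.edgeFinset.card = 8 ∧ chiLA G ≠ 2 := by
  classical
  set F : Finset (Sym2 (Fin 7)) := {s(0, 1), s(1, 2), s(2, 3), s(3, 4), s(4, 5), s(5, 6),
        s(0, 3), s(1, 4)} with hF
  have hEF : G.edgeFinset = F := by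
    ext e
    induction e using Sym2.ind with
    | _ u v => rw [SimpleGraph.mem_edgeFinset, SimpleGraph.mem_edgeSet, hG]
  have hES : G.edgeSet = ↑F := by
    rw [← hEF, SimpleGraph.coe_edgeFinset]
  have hcard : G.edgeFinset.card = 8 := by rw [hEF]; decide
  refine ⟨?_, hcard, ?_⟩
  · intro u v h
    rw [hG] at h
    exact (by decide : ∀ u v : Fin 7, s(u, v) ∈ F →
      (u ∈ ({0, 2, 4, 6} : Finset (Fin 7)) ∧ v ∈ ({1, 3, 5} : Finset (Fin 7))) ∨
      (u ∈ ({1, 3, 5} : Finset (Fin 7)) ∧ v ∈ ({0, 2, 4, 6} : Finset (Fin 7)))) u v h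
  · -- chiLA G ≠ 2
    intro h2
    have hlt : ∃ n ∈ {n : ℕ∞ | ∃ f : Sym2 (Fin 7) → ℕ,
        IsLocalAntimagic G f ∧ (colorCount G f : ℕ∞) = n}, n < 3 := by
      rw [← sInf_lt_iff]
      show chiLA G < 3
      rw [h2]; norm_num
    obtain ⟨n, ⟨f, hf, hcc⟩, hn3⟩ := hlt
    have hcc2 : colorCount G f ≤ 2 := by
      have h3 : (colorCount G f : ℕ∞) < 3 := hcc ▸ hn3
      have h3' : colorCount G f < 3 := by exact_mod_cast h3
      omega
    obtain ⟨⟨hmap, hinj, hsurj⟩, hadj⟩ := hf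
    -- incidence finsets
    have hinc : ∀ v : Fin 7, G.incidenceFinset v = F.filter (v ∈ ·) := by
      intro v
      ext e
      rw [SimpleGraph.mem_incidenceFinset]
      simp [SimpleGraph.incidenceFinset, SimpleGraph.incidenceSet, hES, Finset.mem_filter,
        and_comm, Set.mem_toFinset, Set.mem_setOf_eq]
    have hs : ∀ v : Fin 7, inducedSum G f v = ∑ e ∈ F.filter (v ∈ ·), f e := by
      intro v; rw [inducedSum, hinc]
    have hs0 : inducedSum G f 0 = f s(0,1) + f s(0,3) := by
      rw [hs, show F.filter ((0 : Fin 7) ∈ ·) = {s(0,1), s(0,3)} from by decide]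
      rw [Finset.sum_insert (by decide), Finset.sum_singleton]
    have hs2 : inducedSum G f 2 = f s(1,2) + f s(2,3) := by
      rw [hs, show F.filter ((2 : Fin 7) ∈ ·) = {s(1,2), s(2,3)} from by decide]
      rw [Finset.sum_insert (by decide), Finset.sum_singleton]
    have hs4 : inducedSum G f 4 = f s(3,4) + (f s(4,5) + f s(1,4)) := by
      rw [hs, show F.filter ((4 : Fin 7) ∈ ·) = {s(3,4), s(4,5), s(1,4)} from by decide]
      rw [Finset.sum_insert (by decide), Finset.sum_insert (by decide), Finset.sum_singleton]
    have hs6 : inducedSum G f 6 = f s(5,6) := by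
      rw [hs, show F.filter ((6 : Fin 7) ∈ ·) = {s(5,6)} from by decide,
        Finset.sum_singleton]
    -- total sum is 36
    have hinjF : Set.InjOn f ↑F := by rw [← hES]; exact hinj
    have himg : F.image f = Finset.Icc 1 8 := by
      apply Finset.eq_of_subset_of_card_le
      · intro x hx
        simp only [Finset.mem_image] at hx
        obtain ⟨e, he, rfl⟩ := hx
        have h1 : e ∈ G.edgeSet := by rw [hES]; exact_mod_cast he
        have := hmap h1
        rw [hcard] at this
        simpa [Finset.mem_Icc] using this
      · rw [Finset.card_image_of_injOn hinjF]
        simp [hF]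
    have htot : ∑ e ∈ F, f e = 36 := by
      have h1 : ∑ x ∈ F.image f, x = ∑ e ∈ F, f e :=
        Finset.sum_image (fun x hx y hy h => hinjF hx hy h)
      rw [himg] at h1
      rw [← h1]
      decide
    have htot' : f s(0,1) + (f s(1,2) + (f s(2,3) + (f s(3,4) + (f s(4,5) + (f s(5,6) +
        (f s(0,3) + f s(1,4))))))) = 36 := by
      rw [← htot, hF]
      rw [Finset.sum_insert (by decide), Finset.sum_insert (by decide),
        Finset.sum_insert (by decide), Finset.sum_insert (by decide),
        Finset.sum_insert (by decide), Finset.sum_insert (by decide),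
        Finset.sum_insert (by decide), Finset.sum_singleton]
    -- f s(5,6) ≤ 8
    have hb : f s(5,6) ≤ 8 := by
      have h1 : s(5,6) ∈ G.edgeSet := by rw [hES]; decide
      have := hmap h1
      rw [hcard] at this
      exact this.2
    -- adjacency inequalities
    have adj : ∀ u v : Fin 7, s(u,v) ∈ F → inducedSum G f u ≠ inducedSum G f v := by
      intro u v h
      exact hadj ((hG u v).mpr h)
    have h56 := adj 5 6 (by decide)
    have h45 := adj 4 5 (by decide)
    have h34 := adj 3 4 (by decide)
    have h23 := adj 2 3 (by decide)
    have h12 := adj 1 2 (by decide)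
    have h01 := adj 0 1 (by decide)
    -- the image is exactly {s5, s6}
    have hpair : ∀ v : Fin 7, inducedSum G f v = inducedSum G f 5 ∨
        inducedSum G f v = inducedSum G f 6 := by
      intro v
      have hsub : ({inducedSum G f 5, inducedSum G f 6} : Finset ℕ) ⊆
          Finset.image (inducedSum G f) Finset.univ := by
        intro x hx
        simp only [Finset.mem_insert, Finset.mem_singleton] at hx
        rcases hx with rfl | rfl
        · exact Finset.mem_image_of_mem _ (Finset.mem_univ 5)
        · exact Finset.mem_image_of_mem _ (Finset.mem_univ 6)
      have hIeq : Finset.image (inducedSum G f) Finset.univ =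
          ({inducedSum G f 5, inducedSum G f 6} : Finset ℕ) := by
        refine (Finset.eq_of_subset_of_card_le hsub ?_).symm
        calc (Finset.image (inducedSum G f) Finset.univ).card ≤ 2 := hcc2
          _ = ({inducedSum G f 5, inducedSum G f 6} : Finset ℕ).card := by
            rw [Finset.card_insert_of_notMem (by simpa using h56), Finset.card_singleton]
      have : inducedSum G f v ∈ Finset.image (inducedSum G f) Finset.univ :=
        Finset.mem_image_of_mem _ (Finset.mem_univ v)
      rw [hIeq] at this
      simpa using this
    have e4 : inducedSum G f 4 = inducedSum G f 6 := (hpair 4).resolve_left h45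
    have e3 : inducedSum G f 3 = inducedSum G f 5 := by
      rcases hpair 3 with h | h
      · exact h
      · exact absurd (h.trans e4.symm) h34
    have e2 : inducedSum G f 2 = inducedSum G f 6 := by
      rcases hpair 2 with h | h
      · exact absurd (h.trans e3.symm) h23
      · exact h
    have e1 : inducedSum G f 1 = inducedSum G f 5 := by
      rcases hpair 1 with h | h
      · exact h
      · exact absurd (h.trans e2.symm) h12
    have e0 : inducedSum G f 0 = inducedSum G f 6 := by
      rcases hpair 0 with h | h
      · exact absurd (h.trans e1.symm) h01
      · exact h
    rw [hs0, hs6] at e0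
    rw [hs2, hs6] at e2
    rw [hs4, hs6] at e4
    omega
end

section
/- Suppose G is a connected bipartite graph of even size q that contains exactly one vertex of degree 1 (one pendant). Then the local antimagic chromatic number of G is at least 3. -/
open Finset

namespace LocalAntimagicAux

open LocalAntimagic

variable {V : Type*} [Fintype V] [DecidableEq V]

lemma sum_over_part (G : SimpleGraph V) [DecidableRel G.Adj] (A : Finset V)
    (g : Sym2 V → ℕ)
    (hone : ∀ e ∈ G.edgeFinset, (A.filter (fun v => v ∈ e)).card = 1) :
    ∑ v ∈ A, ∑ e ∈ G.incidenceFinset v, g e = ∑ e ∈ G.edgeFinset, g e := by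
  have h1 : ∀ v : V, ∑ e ∈ G.incidenceFinset v, g e
      = ∑ e ∈ G.edgeFinset, if v ∈ e then g e else 0 := by
    intro v
    rw [G.incidenceFinset_eq_filter, Finset.sum_filter]
  calc ∑ v ∈ A, ∑ e ∈ G.incidenceFinset v, g e
      = ∑ v ∈ A, ∑ e ∈ G.edgeFinset, if v ∈ e then g e else 0 :=
        Finset.sum_congr rfl fun v _ => h1 v
    _ = ∑ e ∈ G.edgeFinset, ∑ v ∈ A, if v ∈ e then g e else 0 := Finset.sum_comm
    _ = ∑ e ∈ G.edgeFinset, g e := by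
        refine Finset.sum_congr rfl fun e he => ?_
        rw [← Finset.sum_filter, Finset.sum_const, hone e he, one_smul]

lemma main (G : SimpleGraph V) [DecidableRel G.Adj]
    (heven : Even G.edgeFinset.card)
    (hpend : (Finset.univ.filter fun v => G.degree v = 1).card = 1)
    (f : Sym2 V → ℕ) (hf : IsLocalAntimagic G f) :
    3 ≤ colorCount G f := by
  by_contra hlt
  push_neg at hlt
  have hS : (Finset.image (inducedSum G f) Finset.univ).card ≤ 2 :=
    Nat.lt_succ_iff.mp hlt
  obtain ⟨hbij, hadj⟩ := hf
  set q := G.edgeFinset.card with hq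
  -- the pendant vertex
  obtain ⟨p, hp⟩ := Finset.card_eq_one.mp hpend
  have hpdeg : G.degree p = 1 := by
    have : p ∈ Finset.univ.filter fun v => G.degree v = 1 := hp ▸ Finset.mem_singleton_self p
    exact (Finset.mem_filter.mp this).2
  have hponly : ∀ v : V, G.degree v = 1 → v = p := by
    intro v hv
    have : v ∈ Finset.univ.filter fun w => G.degree w = 1 :=
      Finset.mem_filter.mpr ⟨Finset.mem_univ v, hv⟩
    rw [hp, Finset.mem_singleton] at this
    exact this
  set a := inducedSum G f p with ha
  -- bounds on a
  have hinc : (G.incidenceFinset p).card = 1 := by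
    rw [G.card_incidenceFinset_eq_degree, hpdeg]
  obtain ⟨e₀, he₀⟩ := Finset.card_eq_one.mp hinc
  have he₀mem : e₀ ∈ G.edgeFinset := by
    have : e₀ ∈ G.incidenceFinset p := he₀ ▸ Finset.mem_singleton_self e₀
    rw [SimpleGraph.mem_incidenceFinset] at this
    exact SimpleGraph.mem_edgeFinset.mpr this.1
  have haeq : a = f e₀ := by
    rw [ha, inducedSum, he₀, Finset.sum_singleton]
  have habound : 1 ≤ a ∧ a ≤ q := by
    have := hbij.mapsTo (SimpleGraph.mem_edgeFinset.mp he₀mem)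
    rw [Set.mem_Icc] at this
    rw [haeq]; exact this
  -- the part A
  set A := Finset.univ.filter (fun v => inducedSum G f v = a) with hA
  have hpA : p ∈ A := Finset.mem_filter.mpr ⟨Finset.mem_univ p, rfl⟩
  -- every edge has exactly one endpoint in A
  have hone : ∀ e ∈ G.edgeFinset, (A.filter (fun v => v ∈ e)).card = 1 := by
    intro e he
    induction e with
    | h u w =>
      have huw : G.Adj u w := SimpleGraph.mem_edgeFinset.mp he
      have hne : u ≠ w := huw.ne
      have hsumne : inducedSum G f u ≠ inducedSum G f w := hadj huw
      have hmemS : ∀ v : V, inducedSum G f v ∈ Finset.image (inducedSum G f) Finset.univ :=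
        fun v => Finset.mem_image_of_mem _ (Finset.mem_univ v)
      have hnotboth : ¬(u ∉ A ∧ w ∉ A) := by
        rintro ⟨hu, hw⟩
        have hu' : inducedSum G f u ≠ a := by
          intro h; exact hu (Finset.mem_filter.mpr ⟨Finset.mem_univ u, h⟩)
        have hw' : inducedSum G f w ≠ a := by
          intro h; exact hw (Finset.mem_filter.mpr ⟨Finset.mem_univ w, h⟩)
        have hsub : ({a, inducedSum G f u, inducedSum G f w} : Finset ℕ)
            ⊆ Finset.image (inducedSum G f) Finset.univ := by
          intro x hx
          simp only [Finset.mem_insert, Finset.mem_singleton] at hx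
          rcases hx with h | h | h
          · exact h ▸ hmemS p
          · exact h ▸ hmemS u
          · exact h ▸ hmemS w
        have h3 : ({a, inducedSum G f u, inducedSum G f w} : Finset ℕ).card = 3 := by
          rw [Finset.card_insert_of_notMem, Finset.card_insert_of_notMem,
            Finset.card_singleton]
          · simpa using hsumne
          · simp only [Finset.mem_insert, Finset.mem_singleton]
            push_neg
            exact ⟨Ne.symm hu', Ne.symm hw'⟩
        have := Finset.card_le_card hsub
        omega
      have hnotbothA : ¬(u ∈ A ∧ w ∈ A) := by
        rintro ⟨hu, hw⟩
        have h1 := (Finset.mem_filter.mp hu).2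
        have h2 := (Finset.mem_filter.mp hw).2
        exact hsumne (h1.trans h2.symm)
      have hmemsym : ∀ v : V, v ∈ s(u, w) ↔ v = u ∨ v = w := fun v => Sym2.mem_iff
      by_cases hu : u ∈ A
      · have hw : w ∉ A := fun hw => hnotbothA ⟨hu, hw⟩
        have : A.filter (fun v => v ∈ s(u, w)) = {u} := by
          ext v
          simp only [Finset.mem_filter, Finset.mem_singleton, hmemsym]
          constructor
          · rintro ⟨hv, h | h⟩
            · exact h
            · exact absurd (h ▸ hv) hw
          · rintro rfl; exact ⟨hu, Or.inl rfl⟩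
        rw [this, Finset.card_singleton]
      · have hw : w ∈ A := by
          by_contra hw
          exact hnotboth ⟨hu, hw⟩
        have : A.filter (fun v => v ∈ s(u, w)) = {w} := by
          ext v
          simp only [Finset.mem_filter, Finset.mem_singleton, hmemsym]
          constructor
          · rintro ⟨hv, h | h⟩
            · exact absurd (h ▸ hv) hu
            · exact h
          · rintro rfl; exact ⟨hw, Or.inr rfl⟩
        rw [this, Finset.card_singleton]
  -- sum of labels over A
  have hsumA : a * A.card = ∑ e ∈ G.edgeFinset, f e := by
    have := sum_over_part G A f hone
    rw [← this]
    have : ∀ v ∈ A, inducedSum G f v = a := fun v hv => (Finset.mem_filter.mp hv).2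
    calc a * A.card = ∑ _v ∈ A, a := by rw [Finset.sum_const, smul_eq_mul, mul_comm]
      _ = ∑ v ∈ A, ∑ e ∈ G.incidenceFinset v, f e :=
          Finset.sum_congr rfl fun v hv => ((this v hv).symm : _)
  -- total label sum
  have hT : (∑ e ∈ G.edgeFinset, f e) * 2 = q * (q + 1) := by
    have h1 : ∑ e ∈ G.edgeFinset, f e = ∑ k ∈ Finset.Icc 1 q, k := by
      refine Finset.sum_bij (fun e _ => f e) ?_ ?_ ?_ ?_
      · intro e he
        have := hbij.mapsTo (SimpleGraph.mem_edgeFinset.mp he)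
        rw [Set.mem_Icc] at this
        exact Finset.mem_Icc.mpr this
      · intro e1 h1 e2 h2 hfe
        exact hbij.injOn (SimpleGraph.mem_edgeFinset.mp h1)
          (SimpleGraph.mem_edgeFinset.mp h2) hfe
      · intro k hk
        have : k ∈ Set.Icc 1 q := Set.mem_Icc.mpr (Finset.mem_Icc.mp hk)
        obtain ⟨e, he, hfe⟩ := hbij.surjOn this
        exact ⟨e, SimpleGraph.mem_edgeFinset.mpr he, hfe⟩
      · intro e _; rfl
    have h2 : Finset.range (q + 1) = insert 0 (Finset.Icc 1 q) := by
      ext k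
      simp only [Finset.mem_range, Finset.mem_Icc, Finset.mem_insert]
      omega
    have h3 : ∑ k ∈ Finset.Icc 1 q, k = ∑ k ∈ Finset.range (q + 1), k := by
      rw [h2, Finset.sum_insert (by simp), zero_add]
    rw [h1, h3, Finset.sum_range_id_mul_two]
    simp [Nat.add_sub_cancel, Nat.mul_comm]
  -- degree sum over A
  have hdegsum : ∑ v ∈ A, G.degree v = q := by
    have := sum_over_part G A (fun _ => 1) hone
    simp only [Finset.sum_const, smul_eq_mul, mul_one] at this
    calc ∑ v ∈ A, G.degree v = ∑ v ∈ A, (G.incidenceFinset v).card :=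
          Finset.sum_congr rfl fun v _ => (G.card_incidenceFinset_eq_degree v).symm
      _ = q := this
  -- degrees in A are at least 2 except for p
  have hdeg2 : ∀ v ∈ A.erase p, 2 ≤ G.degree v := by
    intro v hv
    obtain ⟨hvp, hvA⟩ := Finset.mem_erase.mp hv
    have hva : inducedSum G f v = a := (Finset.mem_filter.mp hvA).2
    have hd0 : G.degree v ≠ 0 := by
      intro h0
      have : (G.incidenceFinset v).card = 0 := by
        rw [G.card_incidenceFinset_eq_degree, h0]
      have hempty : G.incidenceFinset v = ∅ := Finset.card_eq_zero.mp this
      have : inducedSum G f v = 0 := by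
        rw [inducedSum, hempty, Finset.sum_empty]
      omega
    have hd1 : G.degree v ≠ 1 := fun h => hvp (hponly v h)
    omega
  have hdeglow : 1 + 2 * (A.card - 1) ≤ q := by
    rw [← hdegsum, ← Finset.sum_erase_add A _ hpA, hpdeg]
    have : 2 * (A.card - 1) ≤ ∑ v ∈ A.erase p, G.degree v := by
      calc 2 * (A.card - 1) = (A.erase p).card * 2 := by
            rw [Finset.card_erase_of_mem hpA]; ring
        _ ≤ ∑ v ∈ A.erase p, G.degree v := Finset.card_nsmul_le_sum _ _ _ hdeg2
    omega
  -- final arithmetic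
  have hcA1 : 1 ≤ A.card := Finset.card_pos.mpr ⟨p, hpA⟩
  have hmul : q * (q + 1) ≤ q * (2 * A.card) := by
    calc q * (q + 1) = a * A.card * 2 := by rw [hsumA, hT]
      _ ≤ q * A.card * 2 := by
          exact Nat.mul_le_mul_right 2 (Nat.mul_le_mul_right A.card habound.2)
      _ = q * (2 * A.card) := by ring
  have hq1 : 1 ≤ q := le_trans habound.1 habound.2
  have hle : q + 1 ≤ 2 * A.card := Nat.le_of_mul_le_mul_left hmul hq1
  have hqeven : q % 2 = 0 := Nat.even_iff.mp heven
  omega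

end LocalAntimagicAux

open LocalAntimagic in
/-- a connected bipartite graph of even size with exactly one
pendant vertex has `χ_la ≥ 3`. -/
theorem stmt3 {V : Type*} [Fintype V] [DecidableEq V] (G : SimpleGraph V)
    [DecidableRel G.Adj] (hconn : G.Connected) (hbip : G.Colorable 2)
    (heven : Even G.edgeFinset.card)
    (hpend : (Finset.univ.filter fun v => G.degree v = 1).card = 1) :
    3 ≤ chiLA G := by
  rw [chiLA]
  refine le_sInf ?_
  rintro n ⟨f, hf, rfl⟩
  have := LocalAntimagicAux.main G heven hpend f hf
  exact_mod_cast this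
end

section
/- For a cycle C_m = v₀v₁⋯v_{m−1}v₀ with m ≥ 3, the edge labeling f defined by f(v_jv_{j+1}) = (j+2)/2 for even j and f(v_jv_{j+1}) = m − (j−1)/2 for odd j (indices mod m) is a bijection onto {1,...,m}, and induces vertex sums f⁺(v₀) = ⌊m/2⌋ + 2, f⁺(v_j) = m + 1 for odd j, and f⁺(v_j) = m + 2 for even j > 0. In particular, f is a local antimagic labeling of C_m with exactly 3 distinct induced labels. -/
open Finset

namespace Stmt10Aux
open LocalAntimagic

def cg (m : ℕ) (a : ZMod m) : ℕ :=
  if a.val % 2 = 0 then a.val / 2 + 1 else m - (a.val - 1) / 2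

def cf (m : ℕ) [NeZero m] : Sym2 (ZMod m) → ℕ :=
  Sym2.lift ⟨fun a b => (if b = a + 1 then cg m a else 0) + (if a = b + 1 then cg m b else 0),
    fun a b => by dsimp only; rw [add_comm]⟩

variable {m : ℕ} [NeZero m]

lemma cast_ne_zero (hm : 3 ≤ m) {k : ℕ} (h1 : 1 ≤ k) (h2 : k ≤ 2) : ((k : ℕ) : ZMod m) ≠ 0 := by
  intro h
  rw [ZMod.natCast_eq_zero_iff] at h
  have := Nat.le_of_dvd (by omega) h
  omega

lemma one_ne (hm : 3 ≤ m) (a : ZMod m) : a ≠ a + 1 := by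
  intro h
  refine cast_ne_zero hm le_rfl (by norm_num) (m := m) (k := 1) ?_
  push_cast
  linear_combination -h

lemma two_ne (hm : 3 ≤ m) (a : ZMod m) : a ≠ a + 1 + 1 := by
  intro h
  refine cast_ne_zero hm (by norm_num) le_rfl (m := m) (k := 2) ?_
  push_cast
  linear_combination -h

lemma cf_edge (hm : 3 ≤ m) (a : ZMod m) : cf m s(a, a + 1) = cg m a := by
  have h2 := two_ne hm a
  simp [cf, h2]

lemma adj_iff {u v : ZMod m} : (cycle m).Adj u v ↔ u ≠ v ∧ (u = v + 1 ∨ v = u + 1) := by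
  show (u ≠ v ∧ (u - v ∈ ({1} : Finset (ZMod m)) ∨ v - u ∈ ({1} : Finset (ZMod m)))) ↔ _
  constructor
  · rintro ⟨hne, h | h⟩ <;> simp only [Finset.mem_singleton, sub_eq_iff_eq_add] at h
    · exact ⟨hne, Or.inl (by rw [h, add_comm])⟩
    · exact ⟨hne, Or.inr (by rw [h, add_comm])⟩
  · rintro ⟨hne, h | h⟩
    · exact ⟨hne, Or.inl (by simp [sub_eq_iff_eq_add, h, add_comm])⟩
    · exact ⟨hne, Or.inr (by simp [sub_eq_iff_eq_add, h, add_comm])⟩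

lemma mem_edgeSet_iff (hm : 3 ≤ m) (e : Sym2 (ZMod m)) :
    e ∈ (cycle m).edgeSet ↔ ∃ a, e = s(a, a + 1) := by
  refine e.ind fun x y => ?_
  rw [SimpleGraph.mem_edgeSet, adj_iff]
  constructor
  · rintro ⟨hne, h | h⟩
    · exact ⟨y, by rw [h, Sym2.eq_swap]⟩
    · exact ⟨x, by rw [h]⟩
  · rintro ⟨a, h⟩
    rw [Sym2.eq_iff] at h
    rcases h with ⟨rfl, rfl⟩ | ⟨rfl, rfl⟩
    · exact ⟨one_ne hm x, Or.inr rfl⟩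
    · exact ⟨(one_ne hm y).symm, Or.inl rfl⟩

lemma incidence_eq (hm : 3 ≤ m) (v : ZMod m) :
    (cycle m).incidenceFinset v = {s(v, v + 1), s(v - 1, v)} := by
  ext e
  rw [SimpleGraph.mem_incidenceFinset]
  constructor
  · rintro ⟨he, hv⟩
    obtain ⟨a, rfl⟩ := (mem_edgeSet_iff hm e).mp he
    rw [Sym2.mem_iff] at hv
    rcases hv with rfl | rfl
    · exact Finset.mem_insert_self _ _
    · have : a = (a + 1) - 1 := by ring
      rw [Finset.mem_insert, Finset.mem_singleton]
      right
      rw [← this]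
  · intro h
    rw [Finset.mem_insert, Finset.mem_singleton] at h
    rcases h with rfl | rfl
    · exact ⟨(mem_edgeSet_iff hm _).mpr ⟨v, rfl⟩, Sym2.mem_mk_left _ _⟩
    · refine ⟨(mem_edgeSet_iff hm _).mpr ⟨v - 1, by rw [sub_add_cancel]⟩, Sym2.mem_mk_right _ _⟩

lemma sum_eq (hm : 3 ≤ m) (v : ZMod m) :
    inducedSum (cycle m) (cf m) v = cg m (v - 1) + cg m v := by
  have h1 : v + 1 ≠ v := (one_ne hm v).symm
  have h2 : v + 1 ≠ v - 1 := by
    have := two_ne hm (v - 1)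
    rw [sub_add_cancel] at this
    exact this.symm
  have hne : s(v, v + 1) ≠ s(v - 1, v) := by
    intro h
    rw [Sym2.eq_iff] at h
    rcases h with ⟨h, h'⟩ | ⟨h, h'⟩
    · exact h1 h'
    · exact h2 h'
  rw [inducedSum, incidence_eq hm, Finset.sum_pair hne, cf_edge hm]
  have : s(v - 1, v) = s(v - 1, (v - 1) + 1) := by rw [sub_add_cancel]
  rw [this, cf_edge hm, add_comm]

lemma sum_val (hm : 3 ≤ m) (v : ZMod m) :
    inducedSum (cycle m) (cf m) v =
      if v.val = 0 then m / 2 + 2 else if v.val % 2 = 1 then m + 1 else m + 2 := by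
  rw [sum_eq hm]
  have hv := ZMod.val_lt v
  have hone : (1 : ZMod m).val = 1 := by
    haveI : Fact (1 < m) := ⟨by omega⟩
    exact ZMod.val_one m
  by_cases h0 : v.val = 0
  · have hv0 : v = 0 := (ZMod.val_eq_zero v).mp h0
    subst hv0
    have hneg : (0 - 1 : ZMod m).val = m - 1 := by
      obtain ⟨n, rfl⟩ : ∃ n, m = n + 1 := ⟨m - 1, by omega⟩
      rw [zero_sub]
      exact ZMod.val_neg_one n
    rw [cg, cg, hneg, ZMod.val_zero]
    split_ifs <;> omega
  · have h1 : (v - 1).val = v.val - 1 := by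
      rw [ZMod.val_sub (by omega)]
      omega
    rw [cg, cg, h1]
    split_ifs <;> omega

lemma val_injective : Function.Injective (ZMod.val (n := m)) := fun a b h => by
  have := ZMod.natCast_zmod_val a
  rw [← ZMod.natCast_zmod_val a, ← ZMod.natCast_zmod_val b, h]

lemma bij (hm : 3 ≤ m) : Set.BijOn (cf m) (cycle m).edgeSet (Set.Icc 1 m) := by
  refine ⟨?_, ?_, ?_⟩
  · intro e he
    obtain ⟨a, rfl⟩ := (mem_edgeSet_iff hm e).mp he
    rw [cf_edge hm, Set.mem_Icc, cg]
    have := ZMod.val_lt a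
    split_ifs <;> omega
  · intro e he e' he' hfe
    obtain ⟨a, rfl⟩ := (mem_edgeSet_iff hm e).mp he
    obtain ⟨b, rfl⟩ := (mem_edgeSet_iff hm e').mp he'
    rw [cf_edge hm, cf_edge hm, cg, cg] at hfe
    have ha := ZMod.val_lt a
    have hb := ZMod.val_lt b
    have : a.val = b.val := by split_ifs at hfe <;> omega
    rw [val_injective this]
  · intro n hn
    rw [Set.mem_Icc] at hn
    by_cases hc : 2 * n ≤ m + 1
    · have hj : 2 * (n - 1) < m := by omega
      refine ⟨s(((2 * (n - 1) : ℕ) : ZMod m), _ + 1),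
        (mem_edgeSet_iff hm _).mpr ⟨_, rfl⟩, ?_⟩
      rw [cf_edge hm, cg, ZMod.val_natCast_of_lt hj]
      split_ifs <;> omega
    · have hj : 2 * (m - n) + 1 < m := by omega
      refine ⟨s(((2 * (m - n) + 1 : ℕ) : ZMod m), _ + 1),
        (mem_edgeSet_iff hm _).mpr ⟨_, rfl⟩, ?_⟩
      rw [cf_edge hm, cg, ZMod.val_natCast_of_lt hj]
      split_ifs <;> omega

lemma succ_ne (hm : 3 ≤ m) (u : ZMod m) :
    inducedSum (cycle m) (cf m) u ≠ inducedSum (cycle m) (cf m) (u + 1) := by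
  rw [sum_val hm, sum_val hm]
  have hu := ZMod.val_lt u
  have hone : (1 : ZMod m).val = 1 := by
    haveI : Fact (1 < m) := ⟨by omega⟩
    exact ZMod.val_one m
  have h1 : (u + 1).val = (u.val + 1) % m := by rw [ZMod.val_add, hone]
  rcases eq_or_ne (u.val + 1) m with hc | hc
  · have h2 : (u + 1).val = 0 := by rw [h1, hc, Nat.mod_self]
    rw [h2]
    split_ifs <;> omega
  · have h2 : (u + 1).val = u.val + 1 := by rw [h1, Nat.mod_eq_of_lt (by omega)]
    rw [h2]
    split_ifs <;> first | omega | tauto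

lemma adj_ne (hm : 3 ≤ m) {u v : ZMod m} (h : (cycle m).Adj u v) :
    inducedSum (cycle m) (cf m) u ≠ inducedSum (cycle m) (cf m) v := by
  rw [adj_iff] at h
  obtain ⟨_, rfl | rfl⟩ := h
  · exact (succ_ne hm v).symm
  · exact succ_ne hm u

lemma image_eq (hm : 3 ≤ m) :
    Finset.image (inducedSum (cycle m) (cf m)) Finset.univ = {m / 2 + 2, m + 1, m + 2} := by
  haveI : Fact (1 < m) := ⟨by omega⟩
  apply Finset.Subset.antisymm
  · intro x hx
    simp only [Finset.mem_image, Finset.mem_univ, true_and] at hx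
    obtain ⟨v, hv⟩ := hx
    rw [sum_val hm] at hv
    simp only [Finset.mem_insert, Finset.mem_singleton]
    split_ifs at hv <;> tauto
  · intro x hx
    simp only [Finset.mem_insert, Finset.mem_singleton] at hx
    simp only [Finset.mem_image, Finset.mem_univ, true_and]
    have hv1 : (1 : ZMod m).val = 1 := ZMod.val_one m
    have hv2 : (2 : ZMod m).val = 2 := by
      have : (2 : ZMod m) = ((2 : ℕ) : ZMod m) := by push_cast; ring
      rw [this, ZMod.val_natCast_of_lt (by omega)]
    rcases hx with rfl | rfl | rfl
    · exact ⟨0, by rw [sum_val hm, ZMod.val_zero]; simp⟩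
    · exact ⟨1, by rw [sum_val hm, hv1]; norm_num⟩
    · exact ⟨2, by rw [sum_val hm, hv2]; norm_num⟩

lemma card_eq (hm : 3 ≤ m) : (cycle m).edgeFinset.card = m := by
  have hedge : (cycle m).edgeFinset = Finset.image (fun a : ZMod m => s(a, a + 1)) Finset.univ := by
    ext e
    rw [SimpleGraph.mem_edgeFinset, mem_edgeSet_iff hm]
    simp [eq_comm]
  have hinj : Function.Injective (fun a : ZMod m => s(a, a + 1)) := by
    intro a b h
    rw [Sym2.eq_iff] at h
    rcases h with ⟨rfl, _⟩ | ⟨h1, h2⟩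
    · rfl
    · exfalso
      exact two_ne hm a (by linear_combination h1 - h2)
  rw [hedge, Finset.card_image_of_injective _ hinj, Finset.card_univ, ZMod.card]

end Stmt10Aux


open LocalAntimagic in
/-- the `C`-labeling of the cycle `C_m` is a local antimagic
labeling (bijective onto `{1,…,m}`) with the stated induced sums and exactly
3 distinct induced labels. -/
theorem stmt10 (m : ℕ) [NeZero m] (hm : 3 ≤ m) :
    (cycle m).edgeFinset.card = m ∧
    ∃ f : Sym2 (ZMod m) → ℕ,
      (∀ j : Fin m, f s(((j : ℕ) : ZMod m), ((j : ℕ) : ZMod m) + 1) =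
        if Even (j : ℕ) then (j : ℕ) / 2 + 1 else m - ((j : ℕ) - 1) / 2) ∧
      IsLocalAntimagic (cycle m) f ∧
      inducedSum (cycle m) f 0 = m / 2 + 2 ∧
      (∀ j : Fin m, Odd (j : ℕ) → inducedSum (cycle m) f ((j : ℕ) : ZMod m) = m + 1) ∧
      (∀ j : Fin m, 0 < (j : ℕ) → Even (j : ℕ) →
        inducedSum (cycle m) f ((j : ℕ) : ZMod m) = m + 2) ∧
      colorCount (cycle m) f = 3 := by
  have hcard := Stmt10Aux.card_eq (m := m) hm
  refine ⟨hcard, Stmt10Aux.cf m, ?_, ⟨?_, fun u v h => Stmt10Aux.adj_ne hm h⟩, ?_, ?_, ?_, ?_⟩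
  · intro j
    rw [Stmt10Aux.cf_edge hm, Stmt10Aux.cg, ZMod.val_natCast_of_lt j.isLt]
    simp [Nat.even_iff]
  · rw [hcard]
    exact Stmt10Aux.bij hm
  · rw [Stmt10Aux.sum_val hm, ZMod.val_zero]
    simp
  · intro j hj
    rw [Nat.odd_iff] at hj
    rw [Stmt10Aux.sum_val hm, ZMod.val_natCast_of_lt j.isLt, if_neg (by omega), if_pos hj]
  · intro j h0 he
    rw [Nat.even_iff] at he
    rw [Stmt10Aux.sum_val hm, ZMod.val_natCast_of_lt j.isLt, if_neg (by omega),
      if_neg (by omega)]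
  · rw [colorCount, Stmt10Aux.image_eq hm,
      Finset.card_insert_of_notMem (by simp only [Finset.mem_insert, Finset.mem_singleton]; omega),
      Finset.card_insert_of_notMem (by simp only [Finset.mem_singleton]; omega),
      Finset.card_singleton]
end

section
/- Let n ≥ 2, t ≥ 1, and let 1 < a₁ < ⋯ < a_t < n with gcd(a_j, 2n) = 1 for all j. Then the local antimagic chromatic number of the circulant graph C_{2n}(1, a₁, ..., a_t) equals 3. -/
open Finset

open LocalAntimagic

def gLab (n k : ℕ) : ℕ := if k % 2 = 0 then k / 2 + 1 else 2 * n - (k - 1) / 2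

lemma gLab_pos (n k : ℕ) (hn : 1 ≤ n) (hk : k < 2*n) : 1 ≤ gLab n k := by
  unfold gLab; split <;> omega

lemma gLab_le (n k : ℕ) (hk : k < 2*n) : gLab n k ≤ 2*n := by
  unfold gLab; split <;> omega

lemma gLab_inj (n k k' : ℕ) (hn : 1 ≤ n) (hk : k < 2*n) (hk' : k' < 2*n)
    (h : gLab n k = gLab n k') : k = k' := by
  unfold gLab at h; split at h <;> split at h <;> omega

lemma gLab_surj (n r : ℕ) (hr1 : 1 ≤ r) (hr2 : r ≤ 2*n) :
    ∃ k, k < 2*n ∧ gLab n k = r := by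
  rcases le_or_gt r n with h | h
  · exact ⟨2*(r-1), by omega, by unfold gLab; split <;> omega⟩
  · exact ⟨2*(2*n-r)+1, by omega, by unfold gLab; split <;> omega⟩

lemma gLab_pair (n k : ℕ) (hn : 2 ≤ n) (hk : k < 2*n) :
    gLab n ((k + (2*n-1)) % (2*n)) + gLab n k =
      if k = 0 then n + 2 else if k % 2 = 1 then 2*n + 1 else 2*n + 2 := by
  rcases Nat.eq_zero_or_pos k with rfl | hk0
  · have h1 : (0 + (2*n-1)) % (2*n) = 2*n-1 := by
      rw [Nat.zero_add]; exact Nat.mod_eq_of_lt (by omega)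
    unfold gLab
    rw [h1, if_neg (by omega : ¬((2*n-1) % 2 = 0)), if_pos (by omega : (0:ℕ)%2 = 0),
      if_pos rfl]
    omega
  · have h1 : (k + (2*n-1)) % (2*n) = k - 1 := by
      have h2 : k + (2*n-1) = (k-1) + 1*(2*n) := by omega
      rw [h2, Nat.add_mul_mod_self_right]
      exact Nat.mod_eq_of_lt (by omega)
    unfold gLab
    rw [h1, if_neg (by omega : ¬(k = 0))]
    rcases Nat.mod_two_eq_zero_or_one k with h | h
    · rw [if_neg (by omega : ¬((k-1) % 2 = 0)), if_pos h, if_neg (by omega : ¬(k % 2 = 1))]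
      omega
    · rw [if_pos (by omega : (k-1) % 2 = 0), if_neg (by omega : ¬(k % 2 = 0)), if_pos h]
      omega


section Defs

variable (n m : ℕ)

def labF (s : Fin m → ZMod (2*n)) (i : Fin m) (u v : ZMod (2*n)) : ℕ :=
  if v - u = s i then 2*n*(i:ℕ) + gLab n ((u * (s i)⁻¹).val)
  else if u - v = s i then 2*n*(i:ℕ) + gLab n ((v * (s i)⁻¹).val)
  else 0

def lab (s : Fin m → ZMod (2*n)) (i : Fin m) : Sym2 (ZMod (2*n)) → ℕ :=
  Sym2.lift ⟨fun u v => max (labF n m s i u v) (labF n m s i v u),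
    fun u v => max_comm _ _⟩

def clab (s : Fin m → ZMod (2*n)) : Sym2 (ZMod (2*n)) → ℕ :=
  fun e => ∑ i, lab n m s i e

end Defs

section Main

variable {n m : ℕ} [NeZero (2*n)] {s : Fin m → ZMod (2*n)}

lemma s_ne_zero (hn : 2 ≤ n) (hu : ∀ i, IsUnit (s i)) (i : Fin m) : s i ≠ 0 := by
  haveI : Fact (1 < 2*n) := ⟨by omega⟩
  exact (hu i).ne_zero

lemma cast_val_eq (x : ZMod (2*n)) : ((x.val : ℕ) : ZMod (2*n)) = x := by
  rw [ZMod.natCast_val, ZMod.cast_id]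

lemma u_eq (hu : ∀ i, IsUnit (s i)) (i : Fin m) (u : ZMod (2*n)) :
    (((u * (s i)⁻¹).val : ℕ) : ZMod (2*n)) * s i = u := by
  rw [cast_val_eq, mul_assoc, ZMod.inv_mul_of_unit _ (hu i), mul_one]

lemma lab_eval_same (hnne : ∀ i j, s i ≠ - s j) (i : Fin m) (u : ZMod (2*n)) :
    lab n m s i (s(u, u + s i)) = 2*n*(i:ℕ) + gLab n ((u * (s i)⁻¹).val) := by
  have h1 : (u + s i) - u = s i := by ring
  have h2 : u - (u + s i) = - s i := by ring
  have h3 : ¬ (u - (u + s i) = s i) := by rw [h2]; exact fun h => hnne i i h.symm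
  rw [lab, Sym2.lift_mk]
  show max (labF n m s i u (u + s i)) (labF n m s i (u + s i) u) = _
  unfold labF
  rw [if_pos h1, if_neg h3, if_pos h1, max_self]

lemma lab_eval_other (hne : ∀ i j, s i = s j → i = j) (hnne : ∀ i j, s i ≠ - s j)
    (i j : Fin m) (hij : j ≠ i) (u : ZMod (2*n)) :
    lab n m s j (s(u, u + s i)) = 0 := by
  have h1 : (u + s i) - u = s i := by ring
  have h2 : u - (u + s i) = - s i := by ring
  have c1 : ¬ ((u + s i) - u = s j) := by rw [h1]; exact fun h => hij (hne i j h).symm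
  have c2 : ¬ (u - (u + s i) = s j) := by rw [h2]; exact fun h => hnne j i h.symm
  rw [lab, Sym2.lift_mk]
  show max (labF n m s j u (u + s i)) (labF n m s j (u + s i) u) = _
  unfold labF
  rw [if_neg c1, if_neg c2, if_neg c2, if_neg c1, max_self]

lemma clab_eval (hne : ∀ i j, s i = s j → i = j) (hnne : ∀ i j, s i ≠ - s j)
    (i : Fin m) (u : ZMod (2*n)) :
    clab n m s (s(u, u + s i)) = 2*n*(i:ℕ) + gLab n ((u * (s i)⁻¹).val) := by
  rw [clab, Fintype.sum_eq_single i (fun j hj => lab_eval_other hne hnne i j hj u),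
    lab_eval_same hnne]

lemma val_parity (hodd : ∀ i, (s i).val % 2 = 1) (i : Fin m) (k : ℕ) (hk : k < 2*n) :
    (((k:ℕ) : ZMod (2*n)) * s i).val % 2 = k % 2 := by
  rw [ZMod.val_mul, ZMod.val_cast_of_lt hk,
    Nat.mod_mod_of_dvd _ ⟨n, by ring⟩, Nat.mul_mod, hodd i, mul_one, Nat.mod_mod_of_dvd _ (dvd_refl 2)]

lemma ueq_zero_iff (hu : ∀ i, IsUnit (s i)) (i : Fin m) (u : ZMod (2*n)) :
    u = 0 ↔ (u * (s i)⁻¹).val = 0 := by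
  constructor
  · rintro rfl; rw [zero_mul, ZMod.val_zero]
  · intro h
    have h2 : u * (s i)⁻¹ = 0 := by
      have := cast_val_eq (n := n) (u * (s i)⁻¹)
      rw [h] at this; simpa using this.symm
    have := u_eq hu i u
    rw [h2] at this
    rw [← this, ZMod.val_zero]; norm_num

lemma adj_iff (hn : 2 ≤ n) (hu : ∀ i, IsUnit (s i)) {u v : ZMod (2*n)} :
    (circulant (2*n) (Finset.image s univ)).Adj u v ↔ ∃ i, v = u + s i ∨ u = v + s i := by
  constructor
  · rintro ⟨huv, h | h⟩
    · rcases Finset.mem_image.1 h with ⟨i, -, hi⟩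
      exact ⟨i, Or.inr (by rw [hi]; ring)⟩
    · rcases Finset.mem_image.1 h with ⟨i, -, hi⟩
      exact ⟨i, Or.inl (by rw [hi]; ring)⟩
  · rintro ⟨i, rfl | rfl⟩
    · refine ⟨?_, Or.inr (Finset.mem_image.2 ⟨i, Finset.mem_univ i, by ring⟩)⟩
      intro h
      exact s_ne_zero hn hu i (by linear_combination -h)
    · refine ⟨?_, Or.inl (Finset.mem_image.2 ⟨i, Finset.mem_univ i, by ring⟩)⟩
      intro h
      exact s_ne_zero hn hu i (by linear_combination h)

lemma mem_edgeSet_iff (hn : 2 ≤ n) (hu : ∀ i, IsUnit (s i)) (e : Sym2 (ZMod (2*n))) :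
    e ∈ (circulant (2*n) (Finset.image s univ)).edgeSet ↔
      ∃ u i, e = s(u, u + s i) := by
  induction e using Sym2.ind with
  | _ a b =>
    rw [SimpleGraph.mem_edgeSet, adj_iff hn hu]
    constructor
    · rintro ⟨i, rfl | rfl⟩
      · exact ⟨a, i, rfl⟩
      · exact ⟨b, i, Sym2.eq_swap⟩
    · rintro ⟨u, i, h⟩
      rcases Sym2.eq_iff.1 h with ⟨rfl, rfl⟩ | ⟨rfl, rfl⟩
      · exact ⟨i, Or.inl rfl⟩
      · exact ⟨i, Or.inr rfl⟩

lemma div_trick (A i j x y : ℕ) (hx1 : 1 ≤ x) (hx2 : x ≤ A) (hy1 : 1 ≤ y) (hy2 : y ≤ A)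
    (h : A*i + x = A*j + y) : i = j ∧ x = y := by
  have key : ∀ a b u v : ℕ, 1 ≤ u → v ≤ A → A*a + u = A*b + v → a ≤ b := by
    intro a b u v hu1 hv2 heq
    by_contra hab
    have h1 : A*(b+1) ≤ A*a := Nat.mul_le_mul_left A (by omega)
    have h2 : A*(b+1) = A*b + A := by ring
    omega
  have h1 : i ≤ j := key i j x y hx1 hy2 h
  have h2 : j ≤ i := key j i y x hy1 hx2 h.symm
  have : i = j := le_antisymm h1 h2
  subst this
  exact ⟨rfl, by omega⟩

lemma exists_decomp (A M y : ℕ) (hA : 0 < A) (h1 : 1 ≤ y) (h2 : y ≤ A*M) :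
    ∃ i r, i < M ∧ 1 ≤ r ∧ r ≤ A ∧ y = A*i + r := by
  refine ⟨(y-1)/A, (y-1) % A + 1, ?_, by omega, ?_, ?_⟩
  · apply Nat.div_lt_of_lt_mul
    omega
  · have := Nat.mod_lt (y-1) hA
    omega
  · have := Nat.div_add_mod (y-1) A
    omega

lemma clab_bijOn (hn : 2 ≤ n) (hm : 0 < m) (hu : ∀ i, IsUnit (s i))
    (hne : ∀ i j, s i = s j → i = j) (hnne : ∀ i j, s i ≠ - s j) :
    Set.BijOn (clab n m s) (circulant (2*n) (Finset.image s univ)).edgeSet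
      (Set.Icc 1 (2*n*m)) := by
  refine ⟨?_, ?_, ?_⟩
  · intro e he
    rcases (mem_edgeSet_iff hn hu e).1 he with ⟨u, i, rfl⟩
    rw [clab_eval hne hnne]
    have hk : (u * (s i)⁻¹).val < 2*n := ZMod.val_lt _
    have g1 := gLab_pos n _ (by omega) hk
    have g2 := gLab_le n _ hk
    have hi : (i:ℕ) + 1 ≤ m := i.isLt
    constructor
    · omega
    · calc 2*n*(i:ℕ) + gLab n (u * (s i)⁻¹).val ≤ 2*n*(i:ℕ) + 2*n := by omega
      _ = 2*n*((i:ℕ)+1) := by ring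
      _ ≤ 2*n*m := Nat.mul_le_mul_left _ hi
  · intro e he e' he' heq
    rcases (mem_edgeSet_iff hn hu e).1 he with ⟨u, i, rfl⟩
    rcases (mem_edgeSet_iff hn hu e').1 he' with ⟨u', j, rfl⟩
    rw [clab_eval hne hnne, clab_eval hne hnne] at heq
    have hk : (u * (s i)⁻¹).val < 2*n := ZMod.val_lt _
    have hk' : (u' * (s j)⁻¹).val < 2*n := ZMod.val_lt _
    obtain ⟨hij, hgg⟩ := div_trick (2*n) i j _ _
      (gLab_pos n _ (by omega) hk) (gLab_le n _ hk)
      (gLab_pos n _ (by omega) hk') (gLab_le n _ hk') heq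
    have hij' : i = j := Fin.ext hij
    subst hij'
    have hkk : (u * (s i)⁻¹).val = (u' * (s i)⁻¹).val :=
      gLab_inj n _ _ (by omega) hk hk' hgg
    have huu : u = u' := by
      have h1 := u_eq hu i u
      have h2 := u_eq hu i u'
      rw [hkk, h2] at h1
      exact h1.symm
    rw [huu]
  · intro y hy
    obtain ⟨hy1, hy2⟩ := hy
    obtain ⟨i', r, hi', hr1, hr2, hyr⟩ := exists_decomp (2*n) m y (by omega) hy1 hy2
    obtain ⟨k, hk, hgk⟩ := gLab_surj n r hr1 hr2
    set i : Fin m := ⟨i', hi'⟩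
    set u : ZMod (2*n) := ((k:ℕ) : ZMod (2*n)) * s i
    have hval : (u * (s i)⁻¹).val = k := by
      have : u * (s i)⁻¹ = ((k:ℕ) : ZMod (2*n)) := by
        rw [mul_assoc, ZMod.mul_inv_of_unit _ (hu i), mul_one]
      rw [this, ZMod.val_cast_of_lt hk]
    refine ⟨s(u, u + s i), (mem_edgeSet_iff hn hu _).2 ⟨u, i, rfl⟩, ?_⟩
    rw [clab_eval hne hnne, hval, hgk]
    simpa using hyr.symm

lemma edge_card (hn : 2 ≤ n) (hm : 0 < m) (hu : ∀ i, IsUnit (s i))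
    (hne : ∀ i j, s i = s j → i = j) (hnne : ∀ i j, s i ≠ - s j) :
    (circulant (2*n) (Finset.image s univ)).edgeFinset.card = 2*n*m := by
  have hbij := clab_bijOn hn hm hu hne hnne
  have himg : (circulant (2*n) (Finset.image s univ)).edgeFinset.image (clab n m s)
      = Finset.Icc 1 (2*n*m) := by
    apply Finset.coe_injective
    rw [Finset.coe_image, SimpleGraph.coe_edgeFinset, hbij.image_eq, Finset.coe_Icc]
  have hinj : Set.InjOn (clab n m s)
      ↑(circulant (2*n) (Finset.image s univ)).edgeFinset := by
    rw [SimpleGraph.coe_edgeFinset]; exact hbij.injOn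
  rw [← Finset.card_image_of_injOn hinj, himg, Nat.card_Icc]
  omega

lemma e2_eq (hn : 2 ≤ n) (i : Fin m) (v : ZMod (2*n)) :
    s(v - s i, (v - s i) + s i) = s(v - s i, v) := by
  rw [sub_add_cancel]

lemma lab_inc (hn : 2 ≤ n) (hu : ∀ i, IsUnit (s i)) (hnne : ∀ i j, s i ≠ - s j)
    (i : Fin m) (v : ZMod (2*n)) :
    ∑ e ∈ (circulant (2*n) (Finset.image s univ)).incidenceFinset v, lab n m s i e
      = 4*n*(i:ℕ) +
        (gLab n (((v * (s i)⁻¹).val + (2*n-1)) % (2*n)) + gLab n ((v * (s i)⁻¹).val)) := by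
  have hs0 : s i ≠ 0 := s_ne_zero hn hu i
  set e₁ : Sym2 (ZMod (2*n)) := s(v, v + s i) with he₁
  set e₂ : Sym2 (ZMod (2*n)) := s(v - s i, (v - s i) + s i) with he₂
  have he₂' : e₂ = s(v - s i, v) := e2_eq hn i v
  have hne12 : e₁ ≠ e₂ := by
    rw [he₁, he₂']
    intro h
    rcases Sym2.eq_iff.1 h with ⟨h1, h2⟩ | ⟨h1, h2⟩
    · exact hs0 (by linear_combination h2)
    · exact hnne i i (by linear_combination h2)
  have hmem1 : e₁ ∈ (circulant (2*n) (Finset.image s univ)).incidenceFinset v := by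
    rw [SimpleGraph.mem_incidenceFinset, he₁]
    exact (SimpleGraph.mk'_mem_incidenceSet_left_iff _).2
      ((adj_iff hn hu).2 ⟨i, Or.inl rfl⟩)
  have hmem2 : e₂ ∈ (circulant (2*n) (Finset.image s univ)).incidenceFinset v := by
    rw [SimpleGraph.mem_incidenceFinset, he₂']
    exact (SimpleGraph.mk'_mem_incidenceSet_right_iff _).2
      ((adj_iff hn hu).2 ⟨i, Or.inl (by ring)⟩)
  have hsub : ({e₁, e₂} : Finset (Sym2 (ZMod (2*n)))) ⊆
      (circulant (2*n) (Finset.image s univ)).incidenceFinset v := by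
    intro e he
    rcases Finset.mem_insert.1 he with rfl | he
    · exact hmem1
    · rw [Finset.mem_singleton.1 he]; exact hmem2
  have hvanish : ∀ e ∈ (circulant (2*n) (Finset.image s univ)).incidenceFinset v,
      e ∉ ({e₁, e₂} : Finset (Sym2 (ZMod (2*n)))) → lab n m s i e = 0 := by
    intro e he hnot
    rw [SimpleGraph.mem_incidenceFinset] at he
    obtain ⟨hedge, hv⟩ := he
    obtain ⟨w, rfl⟩ : ∃ w, e = s(v, w) := by
      induction e using Sym2.ind with
      | _ a b =>
        rcases Sym2.mem_iff.1 hv with rfl | rfl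
        · exact ⟨b, rfl⟩
        · exact ⟨a, Sym2.eq_swap⟩
    have hw1 : ¬ (w - v = s i) := by
      intro h
      apply hnot
      have : w = v + s i := by linear_combination h
      rw [this]
      exact Finset.mem_insert.2 (Or.inl rfl)
    have hw2 : ¬ (v - w = s i) := by
      intro h
      apply hnot
      have : w = v - s i := by linear_combination -h
      rw [this, Finset.mem_insert, Finset.mem_singleton, he₂', ← Sym2.eq_swap]
      exact Or.inr rfl
    rw [lab, Sym2.lift_mk]
    show max (labF n m s i v w) (labF n m s i w v) = 0
    unfold labF
    rw [if_neg hw1, if_neg hw2, if_neg hw2, if_neg hw1, max_self]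
  rw [← Finset.sum_subset hsub hvanish, Finset.sum_pair hne12]
  have hval1 : lab n m s i e₁ = 2*n*(i:ℕ) + gLab n ((v * (s i)⁻¹).val) :=
    lab_eval_same hnne i v
  have hval2 : lab n m s i e₂ =
      2*n*(i:ℕ) + gLab n (((v * (s i)⁻¹).val + (2*n-1)) % (2*n)) := by
    rw [he₂, lab_eval_same hnne i (v - s i)]
    congr 1
    congr 1
    have hinv : (v - s i) * (s i)⁻¹ = v * (s i)⁻¹ - 1 := by
      have h1 : (s i) * (s i)⁻¹ = 1 := ZMod.mul_inv_of_unit _ (hu i)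
      ring_nf
      linear_combination -h1
    have hcast : ((((v * (s i)⁻¹).val + (2*n-1)) : ℕ) : ZMod (2*n)) = v * (s i)⁻¹ - 1 := by
      push_cast
      rw [cast_val_eq]
      have : ((2*n - 1 : ℕ) : ZMod (2*n)) = -1 := by
        have h4 : ((2*n : ℕ) : ZMod (2*n)) = 0 := ZMod.natCast_self _
        have h5 : (2*n - 1 : ℕ) + 1 = 2*n := by omega
        have := congrArg (fun x : ℕ => ((x : ℕ) : ZMod (2*n))) h5
        push_cast at this h4
        linear_combination this + h4
      rw [this]
      ring
    rw [hinv, ← hcast, ZMod.val_natCast]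
  rw [hval1, hval2]
  ring

def Hv (n : ℕ) (v : ZMod (2*n)) : ℕ :=
  if v = 0 then n+2 else if v.val % 2 = 1 then 2*n+1 else 2*n+2

lemma inducedSum_clab (hn : 2 ≤ n) (hu : ∀ i, IsUnit (s i)) (hodd : ∀ i, (s i).val % 2 = 1)
    (hnne : ∀ i j, s i ≠ - s j) (v : ZMod (2*n)) :
    inducedSum (circulant (2*n) (Finset.image s univ)) (clab n m s) v
      = (∑ i : Fin m, 4*n*(i:ℕ)) + m * Hv n v := by
  rw [inducedSum]
  have h1 : ∑ e ∈ (circulant (2*n) (Finset.image s univ)).incidenceFinset v,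
      clab n m s e = ∑ i : Fin m,
      ∑ e ∈ (circulant (2*n) (Finset.image s univ)).incidenceFinset v, lab n m s i e := by
    rw [Finset.sum_comm]
    rfl
  rw [h1]
  have h2 : ∀ i : Fin m,
      ∑ e ∈ (circulant (2*n) (Finset.image s univ)).incidenceFinset v, lab n m s i e
        = 4*n*(i:ℕ) + Hv n v := by
    intro i
    rw [lab_inc hn hu hnne i v]
    congr 1
    set k := (v * (s i)⁻¹).val with hkdef
    have hk : k < 2*n := ZMod.val_lt _
    rw [gLab_pair n k hn hk]
    have hz : v = 0 ↔ k = 0 := ueq_zero_iff hu i v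
    have hpar : v.val % 2 = k % 2 := by
      have hv := u_eq hu i v
      have := val_parity hodd i k hk
      rw [hkdef] at this ⊢
      rw [hv] at this
      exact this
    rw [Hv]
    by_cases h0 : v = 0
    · rw [if_pos (hz.1 h0), if_pos h0]
    · rw [if_neg (fun hk0 => h0 (hz.2 hk0)), if_neg h0, hpar]
  rw [Finset.sum_congr rfl (fun i _ => h2 i), Finset.sum_add_distrib, Finset.sum_const,
    Finset.card_univ, Fintype.card_fin, smul_eq_mul]

lemma parity_adj (hn : 2 ≤ n) (hu : ∀ i, IsUnit (s i)) (hodd : ∀ i, (s i).val % 2 = 1)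
    {u v : ZMod (2*n)} (h : (circulant (2*n) (Finset.image s univ)).Adj u v) :
    u.val % 2 ≠ v.val % 2 := by
  have key : ∀ (w : ZMod (2*n)) (i : Fin m), (w + s i).val % 2 ≠ w.val % 2 := by
    intro w i
    rw [ZMod.val_add]
    have hd : (w.val + (s i).val) % (2*n) % 2 = (w.val + (s i).val) % 2 :=
      Nat.mod_mod_of_dvd _ ⟨n, by ring⟩
    have ho := hodd i
    omega
  rcases (adj_iff hn hu).1 h with ⟨i, rfl | rfl⟩
  · exact (key u i).symm
  · exact key v i

lemma Hv_ne (hn : 2 ≤ n) {u v : ZMod (2*n)} (hpar : u.val % 2 ≠ v.val % 2) :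
    Hv n u ≠ Hv n v := by
  unfold Hv
  by_cases hu0 : u = 0 <;> by_cases hv0 : v = 0
  · rw [hu0, hv0] at hpar; exact absurd rfl hpar
  · have hval : u.val = 0 := by rw [hu0, ZMod.val_zero]
    rw [if_pos hu0, if_neg hv0]
    split_ifs <;> omega
  · have hval : v.val = 0 := by rw [hv0, ZMod.val_zero]
    rw [if_neg hu0, if_pos hv0]
    split_ifs <;> omega
  · rw [if_neg hu0, if_neg hv0]
    split_ifs <;> omega

lemma clab_antimagic (hn : 2 ≤ n) (hm : 0 < m) (hu : ∀ i, IsUnit (s i))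
    (hodd : ∀ i, (s i).val % 2 = 1)
    (hne : ∀ i j, s i = s j → i = j) (hnne : ∀ i j, s i ≠ - s j) :
    IsLocalAntimagic (circulant (2*n) (Finset.image s univ)) (clab n m s) := by
  constructor
  · rw [edge_card hn hm hu hne hnne]
    exact clab_bijOn hn hm hu hne hnne
  · intro u v h
    rw [inducedSum_clab hn hu hodd hnne, inducedSum_clab hn hu hodd hnne]
    intro heq
    have h2 : m * Hv n u = m * Hv n v := by omega
    exact Hv_ne hn (parity_adj hn hu hodd h)
      (mul_left_cancel₀ (by omega : m ≠ 0) h2)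

lemma clab_colorCount (hn : 2 ≤ n) (hm : 0 < m) (hu : ∀ i, IsUnit (s i))
    (hodd : ∀ i, (s i).val % 2 = 1)
    (hnne : ∀ i j, s i ≠ - s j) :
    colorCount (circulant (2*n) (Finset.image s univ)) (clab n m s) = 3 := by
  set C := ∑ i : Fin m, 4*n*(i:ℕ) with hC
  have himg : Finset.image
      (inducedSum (circulant (2*n) (Finset.image s univ)) (clab n m s)) Finset.univ
      = {C + m*(n+2), C + m*(2*n+1), C + m*(2*n+2)} := by
    apply Finset.ext
    intro x
    simp only [Finset.mem_image, Finset.mem_univ, true_and, Finset.mem_insert,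
      Finset.mem_singleton]
    constructor
    · rintro ⟨v, rfl⟩
      rw [inducedSum_clab hn hu hodd hnne, Hv]
      split_ifs
      · exact Or.inl rfl
      · exact Or.inr (Or.inl rfl)
      · exact Or.inr (Or.inr rfl)
    · have hv0 : inducedSum (circulant (2*n) (Finset.image s univ)) (clab n m s) 0
          = C + m*(n+2) := by
        rw [inducedSum_clab hn hu hodd hnne, Hv, if_pos rfl]
      have h1val : (1 : ZMod (2*n)).val = 1 := by
        haveI : Fact (1 < 2*n) := ⟨by omega⟩
        exact ZMod.val_one _
      have hv1 : inducedSum (circulant (2*n) (Finset.image s univ)) (clab n m s) 1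
          = C + m*(2*n+1) := by
        rw [inducedSum_clab hn hu hodd hnne, Hv,
          if_neg (fun h => by rw [h, ZMod.val_zero] at h1val; omega),
          if_pos (by rw [h1val])]
      have h2val : (2 : ZMod (2*n)).val = 2 := by
        have : ((2:ℕ) : ZMod (2*n)) = (2 : ZMod (2*n)) := by push_cast; ring
        rw [← this, ZMod.val_cast_of_lt (by omega)]
      have hv2 : inducedSum (circulant (2*n) (Finset.image s univ)) (clab n m s) 2
          = C + m*(2*n+2) := by
        rw [inducedSum_clab hn hu hodd hnne, Hv,
          if_neg (fun h => by rw [h, ZMod.val_zero] at h2val; omega),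
          if_neg (by rw [h2val]; omega)]
      rintro (rfl | rfl | rfl)
      · exact ⟨0, hv0⟩
      · exact ⟨1, hv1⟩
      · exact ⟨2, hv2⟩
  rw [colorCount, himg]
  have d1 : m*(n+2) < m*(2*n+1) := by
    exact mul_lt_mul_of_pos_left (by omega) (by omega)
  have d2 : m*(2*n+1) < m*(2*n+2) := by
    exact mul_lt_mul_of_pos_left (by omega) (by omega)
  rw [Finset.card_insert_of_notMem (by
      simp only [Finset.mem_insert, Finset.mem_singleton]
      push_neg
      omega),
    Finset.card_insert_of_notMem (by
      simp only [Finset.mem_singleton]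
      omega),
    Finset.card_singleton]

lemma two_elt_trick {α : Type*} [DecidableEq α] {T : Finset α} (hT : T.card ≤ 2)
    {a b c : α} (ha : a ∈ T) (hb : b ∈ T) (hc : c ∈ T) (hac : a ≠ c) (hbc : b ≠ c) :
    a = b := by
  by_contra hab
  have hsub : ({a, b, c} : Finset α) ⊆ T := by
    intro x hx
    rcases Finset.mem_insert.1 hx with rfl | hx
    · exact ha
    rcases Finset.mem_insert.1 hx with rfl | hx
    · exact hb
    · rw [Finset.mem_singleton.1 hx]; exact hc
  have h3 : ({a, b, c} : Finset α).card = 3 := by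
    rw [Finset.card_insert_of_notMem (by simp [hab, hac]),
      Finset.card_insert_of_notMem (by simp [hbc]), Finset.card_singleton]
  have := Finset.card_le_card hsub
  omega

lemma sum_part (hn : 2 ≤ n) (hu : ∀ i, IsUnit (s i))
    (P : ZMod (2*n) → Prop) [DecidablePred P]
    (hP : ∀ u v, (circulant (2*n) (Finset.image s univ)).Adj u v → (P u ↔ ¬ P v))
    (f : Sym2 (ZMod (2*n)) → ℕ) :
    ∑ v ∈ Finset.univ.filter P,
      inducedSum (circulant (2*n) (Finset.image s univ)) f v
      = ∑ e ∈ (circulant (2*n) (Finset.image s univ)).edgeFinset, f e := by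
  classical
  have hdis : (↑(Finset.univ.filter P) : Set (ZMod (2*n))).PairwiseDisjoint
      (fun v => ((circulant (2*n) (Finset.image s univ)).incidenceFinset v :
        Finset (Sym2 (ZMod (2*n))))) := by
    intro u hu' v hv' huv
    refine Finset.disjoint_left.2 fun e he1 he2 => ?_
    rw [SimpleGraph.mem_incidenceFinset] at he1 he2
    have hadj := SimpleGraph.adj_of_mem_incidenceSet _ huv he1 he2
    have h1 := (hP u v hadj).1
    simp only [Finset.coe_filter, Set.mem_setOf_eq, Finset.mem_univ, true_and] at hu' hv'
    exact h1 hu' hv'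
  have hcover : (Finset.univ.filter P).biUnion
      (fun v => (circulant (2*n) (Finset.image s univ)).incidenceFinset v)
      = (circulant (2*n) (Finset.image s univ)).edgeFinset := by
    apply Finset.ext
    intro e
    rw [Finset.mem_biUnion]
    constructor
    · rintro ⟨v, -, he⟩
      rw [SimpleGraph.mem_incidenceFinset] at he
      exact SimpleGraph.mem_edgeFinset.2 he.1
    · intro he
      rw [SimpleGraph.mem_edgeFinset] at he
      induction e using Sym2.ind with
      | _ a b =>
        rw [SimpleGraph.mem_edgeSet] at he
        by_cases hPa : P a
        · exact ⟨a, Finset.mem_filter.2 ⟨Finset.mem_univ a, hPa⟩,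
            (SimpleGraph.mem_incidenceFinset _ _ _).2
              ((SimpleGraph.mk'_mem_incidenceSet_left_iff _).2 he)⟩
        · have hPb : P b := by
            by_contra hPb
            exact hPa ((hP a b he).2 hPb)
          exact ⟨b, Finset.mem_filter.2 ⟨Finset.mem_univ b, hPb⟩,
            (SimpleGraph.mem_incidenceFinset _ _ _).2
              ((SimpleGraph.mk'_mem_incidenceSet_right_iff _).2 he)⟩
  rw [← hcover, Finset.sum_biUnion hdis]
  rfl

lemma card_parity (hn : 2 ≤ n) (r : ℕ) (hr : r < 2) :
    (Finset.univ.filter (fun v : ZMod (2*n) => v.val % 2 = r)).card = n := by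
  have himg : Finset.univ.filter (fun v : ZMod (2*n) => v.val % 2 = r)
      = Finset.image (fun j : Fin n => (((2*(j:ℕ)+r : ℕ)) : ZMod (2*n))) Finset.univ := by
    apply Finset.ext
    intro v
    rw [Finset.mem_filter, Finset.mem_image]
    constructor
    · rintro ⟨-, hv⟩
      have hvlt : v.val < 2*n := ZMod.val_lt _
      refine ⟨⟨v.val / 2, by omega⟩, Finset.mem_univ _, ?_⟩
      have : 2*(v.val/2) + r = v.val := by omega
      rw [this, cast_val_eq]
    · rintro ⟨j, -, rfl⟩
      have hj : (j:ℕ) < n := j.isLt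
      refine ⟨Finset.mem_univ _, ?_⟩
      rw [ZMod.val_cast_of_lt (by omega)]
      omega
  have hinj : Set.InjOn (fun j : Fin n => (((2*(j:ℕ)+r : ℕ)) : ZMod (2*n)))
      ↑(Finset.univ : Finset (Fin n)) := by
    intro j _ j' _ hjj
    have hj : (j:ℕ) < n := j.isLt
    have hj' : (j':ℕ) < n := j'.isLt
    have := congrArg ZMod.val hjj
    rw [ZMod.val_cast_of_lt (by omega), ZMod.val_cast_of_lt (by omega)] at this
    exact Fin.ext (by omega)
  rw [himg, Finset.card_image_of_injOn hinj, Finset.card_univ, Fintype.card_fin]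

lemma lower_bound (hn : 2 ≤ n) (hm : 0 < m) (hu : ∀ i, IsUnit (s i))
    (hodd : ∀ i, (s i).val % 2 = 1)
    (f : Sym2 (ZMod (2*n)) → ℕ)
    (hf : IsLocalAntimagic (circulant (2*n) (Finset.image s univ)) f) :
    3 ≤ colorCount (circulant (2*n) (Finset.image s univ)) f := by
  classical
  set S₀ := inducedSum (circulant (2*n) (Finset.image s univ)) f with hS₀
  set i0 : Fin m := ⟨0, hm⟩ with hi0
  have hadj : ∀ v : ZMod (2*n), (circulant (2*n) (Finset.image s univ)).Adj v (v + s i0) :=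
    fun v => (adj_iff hn hu).2 ⟨i0, Or.inl rfl⟩
  have hne2 : ∀ v, S₀ v ≠ S₀ (v + s i0) := fun v => hf.2 (hadj v)
  by_contra hlt
  push_neg at hlt
  have hcard : (Finset.image S₀ Finset.univ).card ≤ 2 := by
    rw [colorCount, ← hS₀] at hlt
    omega
  have hmemim : ∀ v, S₀ v ∈ Finset.image S₀ Finset.univ :=
    fun v => Finset.mem_image.2 ⟨v, Finset.mem_univ v, rfl⟩
  have hstep : ∀ v, S₀ (v + s i0 + s i0) = S₀ v := by
    intro v
    exact two_elt_trick hcard (hmemim _) (hmemim _) (hmemim (v + s i0))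
      (fun h => hne2 (v + s i0) h.symm) (hne2 v)
  have hiter : ∀ j : ℕ, S₀ (((2*j : ℕ) : ZMod (2*n)) * s i0) = S₀ 0 ∧
      S₀ (((2*j+1 : ℕ) : ZMod (2*n)) * s i0) = S₀ (s i0) := by
    intro j
    induction j with
    | zero => constructor <;> simp
    | succ j ih =>
      constructor
      · have h1 : ((2*(j+1) : ℕ) : ZMod (2*n)) * s i0
            = ((2*j : ℕ) : ZMod (2*n)) * s i0 + s i0 + s i0 := by push_cast; ring
        rw [h1, hstep]
        exact ih.1
      · have h1 : ((2*(j+1)+1 : ℕ) : ZMod (2*n)) * s i0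
            = ((2*j+1 : ℕ) : ZMod (2*n)) * s i0 + s i0 + s i0 := by push_cast; ring
        rw [h1, hstep]
        exact ih.2
  have hclass : ∀ v : ZMod (2*n),
      (v.val % 2 = 0 → S₀ v = S₀ 0) ∧ (v.val % 2 = 1 → S₀ v = S₀ (s i0)) := by
    intro v
    set k := (v * (s i0)⁻¹).val with hk
    have hklt : k < 2*n := ZMod.val_lt _
    have hveq : ((k : ℕ) : ZMod (2*n)) * s i0 = v := u_eq hu i0 v
    have hpar : v.val % 2 = k % 2 := by
      conv_lhs => rw [← hveq]
      exact val_parity hodd i0 k hklt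
    constructor
    · intro hv
      obtain ⟨j, hj⟩ : ∃ j, k = 2*j := ⟨k/2, by omega⟩
      rw [← hveq, hj]
      exact (hiter j).1
    · intro hv
      obtain ⟨j, hj⟩ : ∃ j, k = 2*j+1 := ⟨k/2, by omega⟩
      rw [← hveq, hj]
      exact (hiter j).2
  have hPiff : ∀ u v, (circulant (2*n) (Finset.image s univ)).Adj u v →
      ((fun w : ZMod (2*n) => w.val % 2 = 0) u ↔ ¬ (fun w : ZMod (2*n) => w.val % 2 = 0) v) := by
    intro u v h
    have := parity_adj hn hu hodd h
    simp only []
    omega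
  have hsum0 : ∑ v ∈ Finset.univ.filter (fun w : ZMod (2*n) => w.val % 2 = 0), S₀ v
      = n * S₀ 0 := by
    rw [Finset.sum_congr rfl (fun v hv => (hclass v).1 (Finset.mem_filter.1 hv).2),
      Finset.sum_const, card_parity hn 0 (by omega), smul_eq_mul]
  have hsum1 : ∑ v ∈ Finset.univ.filter (fun w : ZMod (2*n) => w.val % 2 = 1), S₀ v
      = n * S₀ (s i0) := by
    rw [Finset.sum_congr rfl (fun v hv => (hclass v).2 (Finset.mem_filter.1 hv).2),
      Finset.sum_const, card_parity hn 1 (by omega), smul_eq_mul]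
  have hE0 := sum_part hn hu (fun w : ZMod (2*n) => w.val % 2 = 0) hPiff f
  have hE1 := sum_part hn hu (fun w : ZMod (2*n) => w.val % 2 = 1)
    (by
      intro u v h
      have := parity_adj hn hu hodd h
      show u.val % 2 = 1 ↔ ¬ v.val % 2 = 1
      omega) f
  have hfin : n * S₀ 0 = n * S₀ (s i0) := by
    rw [← hsum0, ← hsum1, hE0, hE1]
  have : S₀ 0 = S₀ (s i0) := mul_left_cancel₀ (by omega : n ≠ 0) hfin
  exact hne2 0 (by rwa [zero_add])

end Main

theorem main_circulant (n m : ℕ) [NeZero (2*n)] (hn : 2 ≤ n) (hm : 0 < m)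
    (s : Fin m → ZMod (2*n)) (hu : ∀ i, IsUnit (s i)) (hodd : ∀ i, (s i).val % 2 = 1)
    (hne : ∀ i j, s i = s j → i = j) (hnne : ∀ i j, s i ≠ - s j) :
    chiLA (circulant (2*n) (Finset.image s univ)) = 3 := by
  apply le_antisymm
  · apply sInf_le
    refine ⟨clab n m s, clab_antimagic hn hm hu hodd hne hnne, ?_⟩
    have h3 := clab_colorCount hn hm hu hodd hnne
    exact_mod_cast congrArg (Nat.cast : ℕ → ℕ∞) h3
  · apply le_sInf
    rintro x ⟨f, hf, rfl⟩
    exact_mod_cast lower_bound hn hm hu hodd f hf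


open LocalAntimagic in
/-- for `1 < a₁ < ⋯ < a_t < n` with each `a_j` coprime to `2n`,
`χ_la(C_{2n}(1, a₁, …, a_t)) = 3`. -/
theorem stmt12 (n t : ℕ) [NeZero n] (hn : 2 ≤ n) (ht : 1 ≤ t)
    (a : Fin t → ℕ) (hmono : StrictMono a) (h1 : ∀ j, 1 < a j)
    (hlt : ∀ j, a j < n) (hcop : ∀ j, Nat.gcd (a j) (2 * n) = 1) :
    chiLA (circulant (2 * n)
      (insert (1 : ZMod (2 * n))
        (Finset.image (fun j => ((a j : ℕ) : ZMod (2 * n))) Finset.univ))) = 3 := by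
  classical
  set b : Fin (t+1) → ℕ := Fin.cases 1 a with hbdef
  set s : Fin (t+1) → ZMod (2*n) := fun i => ((b i : ℕ) : ZMod (2*n)) with hsdef
  have hb : ∀ i : Fin (t+1), 1 ≤ b i ∧ b i < n ∧ Nat.gcd (b i) (2*n) = 1 := by
    intro i
    induction i using Fin.cases with
    | zero =>
      simp only [hbdef, Fin.cases_zero]
      exact ⟨le_refl 1, by omega, Nat.gcd_one_left _⟩
    | succ j =>
      simp only [hbdef, Fin.cases_succ]
      exact ⟨by have := h1 j; omega, hlt j, hcop j⟩
  have hbinj : Function.Injective b := by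
    intro i j hij
    induction i using Fin.cases with
    | zero =>
      induction j using Fin.cases with
      | zero => rfl
      | succ j' =>
        exfalso
        simp only [hbdef, Fin.cases_zero, Fin.cases_succ] at hij
        have := h1 j'
        omega
    | succ i' =>
      induction j using Fin.cases with
      | zero =>
        exfalso
        simp only [hbdef, Fin.cases_zero, Fin.cases_succ] at hij
        have := h1 i'
        omega
      | succ j' =>
        simp only [hbdef, Fin.cases_succ] at hij
        rw [hmono.injective hij]
  have hsval : ∀ i, (s i).val = b i := by
    intro i
    rw [hsdef]
    exact ZMod.val_cast_of_lt (by have := (hb i).2.1; omega)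
  have hu : ∀ i, IsUnit (s i) := by
    intro i
    rw [hsdef]
    exact (ZMod.isUnit_iff_coprime (b i) (2*n)).2 ((hb i).2.2)
  have hodd : ∀ i, (s i).val % 2 = 1 := by
    intro i
    rw [hsval i]
    have hnd : ¬ (2 ∣ b i) := by
      intro hd
      have := Nat.dvd_gcd hd (⟨n, rfl⟩ : 2 ∣ 2*n)
      rw [(hb i).2.2] at this
      omega
    omega
  have hne : ∀ i j, s i = s j → i = j := by
    intro i j hij
    apply hbinj
    rw [← hsval i, ← hsval j, hij]
  have hnne : ∀ i j, s i ≠ - s j := by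
    intro i j hij
    have hz : ((b i + b j : ℕ) : ZMod (2*n)) = 0 := by
      push_cast
      rw [hsdef] at hij
      simp only at hij
      linear_combination hij
    rw [ZMod.natCast_eq_zero_iff] at hz
    have h1' := (hb i).1
    have h2' := (hb j).2.1
    have h3' := (hb i).2.1
    have h4' := (hb j).1
    rcases hz with ⟨c, hc⟩
    rcases (by omega : c = 0 ∨ 1 ≤ c) with rfl | hcc
    · omega
    · have hge : 2*n ≤ 2*n*c := Nat.le_mul_of_pos_right _ (by omega)
      omega
  have hS : (insert (1 : ZMod (2*n))
      (Finset.image (fun j => ((a j : ℕ) : ZMod (2*n))) Finset.univ))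
      = Finset.image s Finset.univ := by
    apply Finset.ext
    intro x
    simp only [Finset.mem_insert, Finset.mem_image, Finset.mem_univ, true_and]
    constructor
    · rintro (rfl | ⟨j, rfl⟩)
      · exact ⟨0, by simp [hsdef, hbdef]⟩
      · exact ⟨j.succ, by simp [hsdef, hbdef]⟩
    · rintro ⟨i, rfl⟩
      induction i using Fin.cases with
      | zero => left; simp [hsdef, hbdef]
      | succ j => right; exact ⟨j, by simp [hsdef, hbdef]⟩
  rw [hS]
  exact main_circulant n (t+1) hn (by omega) s hu hodd hne hnne
end
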